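/- arXiv:1301.2237 — 3 statements merged into one kernel-verified Lean document; each statement's English description precedes it below -/
import Mathlib

section
/- Let X₁,...,X_N be discrete random variables and let A ⊆ {1,...,N} with complement Ā. If X₁,...,X_N are conditionally independent given W, then I(X₁,...,X_N;W) ≥ I(X^A; X^Ā), where X^A denotes the subvector indexed by A. Consequently C(X₁,...,X_N) ≥ max_A I(X^A;X^Ā). -/
open scoped BigOperators

/-- Shannon entropy of a pmf on a finite alphabet (natural log). -/
noncomputable def ent {A : Type*} [Fintype A] (p : A → ℝ) : ℝ :=
  -∑ a, p a * Real.log (p a)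

/-- `p` is a probability mass function. -/
def IsPMF {A : Type*} [Fintype A] (p : A → ℝ) : Prop :=
  (∀ a, 0 ≤ p a) ∧ ∑ a, p a = 1

lemma collapse {ι κ : Type*} [Fintype ι] [Fintype κ] [DecidableEq κ]
    (π : ι → κ) (p : ι → ℝ) (G : κ → ℝ) :
    ∑ k, (∑ i, if π i = k then p i else 0) * G k = ∑ i, p i * G (π i) := by
  simp only [Finset.sum_mul]
  rw [Finset.sum_comm]
  refine Finset.sum_congr rfl fun i _ => ?_
  simp [ite_mul]

lemma gibbs {ι : Type*} [Fintype ι] (p s : ι → ℝ) (hp : ∀ i, 0 ≤ p i)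
    (hs : ∀ i, 0 ≤ s i) (hsum : ∑ i, s i ≤ ∑ i, p i)
    (hpos : ∀ i, 0 < p i → 0 < s i) :
    ∑ i, p i * Real.log (s i / p i) ≤ 0 := by
  have h1 : ∀ i, p i * Real.log (s i / p i) ≤ s i - p i := by
    intro i
    rcases eq_or_lt_of_le (hp i) with h | h
    · simp [← h, hs i]
    · have hsi := hpos i h
      have hd : 0 < s i / p i := div_pos hsi h
      calc p i * Real.log (s i / p i) ≤ p i * (s i / p i - 1) :=
            mul_le_mul_of_nonneg_left (Real.log_le_sub_one_of_pos hd) (hp i)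
        _ = s i - p i := by field_simp
  calc ∑ i, p i * Real.log (s i / p i) ≤ ∑ i, (s i - p i) := Finset.sum_le_sum fun i _ => h1 i
    _ = ∑ i, s i - ∑ i, p i := Finset.sum_sub_distrib _ _
    _ ≤ 0 := by linarith

lemma ite_nonneg' {c : Prop} [Decidable c] {a : ℝ} (h : 0 ≤ a) :
    0 ≤ if c then a else 0 := by split_ifs <;> simp [h]

lemma gibbs2 {ι W : Type*} [Fintype ι] [Fintype W] (p s : ι → W → ℝ)
    (hp : ∀ x w, 0 ≤ p x w) (hs : ∀ x w, 0 ≤ s x w)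
    (hsum : ∑ x, ∑ w, s x w ≤ ∑ x, ∑ w, p x w)
    (hpos : ∀ x w, 0 < p x w → 0 < s x w) :
    ∑ x, ∑ w, p x w * Real.log (s x w / p x w) ≤ 0 := by
  have h1 : ∀ x w, p x w * Real.log (s x w / p x w) ≤ s x w - p x w := by
    intro x w
    rcases eq_or_lt_of_le (hp x w) with h | h
    · simp [← h, hs x w]
    · have hsi := hpos x w h
      have hd : 0 < s x w / p x w := div_pos hsi h
      calc p x w * Real.log (s x w / p x w) ≤ p x w * (s x w / p x w - 1) :=
            mul_le_mul_of_nonneg_left (Real.log_le_sub_one_of_pos hd) (hp x w)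
        _ = s x w - p x w := by field_simp
  calc ∑ x, ∑ w, p x w * Real.log (s x w / p x w)
      ≤ ∑ x, ∑ w, (s x w - p x w) :=
        Finset.sum_le_sum fun x _ => Finset.sum_le_sum fun w _ => h1 x w
    _ = ∑ x, ∑ w, s x w - ∑ x, ∑ w, p x w := by
        simp [Finset.sum_sub_distrib]
    _ ≤ 0 := by linarith

lemma main_ineq {ι κA κB W : Type*} [Fintype ι] [Fintype κA] [Fintype κB] [Fintype W]
    [DecidableEq κA] [DecidableEq κB]
    (p : ι → W → ℝ) (πA : ι → κA) (πB : ι → κB) (hp0 : ∀ x w, 0 ≤ p x w)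
    (hCI : ∀ x w, p x w * (∑ y, p y w)
      = (∑ y, if πA y = πA x then p y w else 0) * (∑ y, if πB y = πB x then p y w else 0)) :
    ent (fun u => ∑ x, ∑ w, if πA x = u then p x w else 0)
      + ent (fun v => ∑ x, ∑ w, if πB x = v then p x w else 0)
      - ent (fun x => ∑ w, p x w)
    ≤ ent (fun x => ∑ w, p x w) + ent (fun w => ∑ x, p x w)
      - ent (fun xw : ι × W => p xw.1 xw.2) := by
  classical
  set m : ι → ℝ := fun x => ∑ w, p x w with hm
  set q : W → ℝ := fun w => ∑ x, p x w with hq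
  set a' : κA → W → ℝ := fun u w => ∑ y, if πA y = u then p y w else 0 with ha'
  set b' : κB → W → ℝ := fun v w => ∑ y, if πB y = v then p y w else 0 with hb'
  set aa : κA → ℝ := fun u => ∑ y, if πA y = u then m y else 0 with haa
  set bb : κB → ℝ := fun v => ∑ y, if πB y = v then m y else 0 with hbb
  -- basic positivity / monotonicity facts
  have hm0 : ∀ x, 0 ≤ m x := fun x => Finset.sum_nonneg fun w _ => hp0 x w
  have hq0 : ∀ w, 0 ≤ q w := fun w => Finset.sum_nonneg fun x _ => hp0 x w
  have ha'0 : ∀ u w, 0 ≤ a' u w := fun u w =>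
    Finset.sum_nonneg fun y _ => ite_nonneg' (hp0 y w)
  have hb'0 : ∀ v w, 0 ≤ b' v w := fun v w =>
    Finset.sum_nonneg fun y _ => ite_nonneg' (hp0 y w)
  have haa0 : ∀ u, 0 ≤ aa u := fun u =>
    Finset.sum_nonneg fun y _ => ite_nonneg' (hm0 y)
  have hbb0 : ∀ v, 0 ≤ bb v := fun v =>
    Finset.sum_nonneg fun y _ => ite_nonneg' (hm0 y)
  have hpm : ∀ x w, p x w ≤ m x := fun x w =>
    Finset.single_le_sum (fun w' _ => hp0 x w') (Finset.mem_univ w)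
  have hpq : ∀ x w, p x w ≤ q w := fun x w =>
    Finset.single_le_sum (fun y _ => hp0 y w) (Finset.mem_univ x)
  have hpa' : ∀ x w, p x w ≤ a' (πA x) w := by
    intro x w
    have := Finset.single_le_sum (f := fun y => if πA y = πA x then p y w else 0)
      (fun y _ => ite_nonneg' (hp0 y w)) (Finset.mem_univ x)
    simpa using this
  have hpb' : ∀ x w, p x w ≤ b' (πB x) w := by
    intro x w
    have := Finset.single_le_sum (f := fun y => if πB y = πB x then p y w else 0)
      (fun y _ => ite_nonneg' (hp0 y w)) (Finset.mem_univ x)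
    simpa using this
  have hmaa : ∀ x, m x ≤ aa (πA x) := by
    intro x
    have := Finset.single_le_sum (f := fun y => if πA y = πA x then m y else 0)
      (fun y _ => ite_nonneg' (hm0 y)) (Finset.mem_univ x)
    simpa using this
  have hmbb : ∀ x, m x ≤ bb (πB x) := by
    intro x
    have := Finset.single_le_sum (f := fun y => if πB y = πB x then m y else 0)
      (fun y _ => ite_nonneg' (hm0 y)) (Finset.mem_univ x)
    simpa using this
  have haaw : ∀ u, ∑ w, a' u w = aa u := by
    intro u
    rw [Finset.sum_comm]
    refine Finset.sum_congr rfl fun y _ => ?_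
    split_ifs <;> simp [hm]
  have hbbw : ∀ v, ∑ w, b' v w = bb v := by
    intro v
    rw [Finset.sum_comm]
    refine Finset.sum_congr rfl fun y _ => ?_
    split_ifs <;> simp [hm]
  -- rewrite the two marginal entropies
  have e1 : (fun u => ∑ x, ∑ w, if πA x = u then p x w else 0) = aa := by
    funext u
    refine Finset.sum_congr rfl fun x _ => ?_
    split_ifs <;> simp [hm]
  have e2 : (fun v => ∑ x, ∑ w, if πB x = v then p x w else 0) = bb := by
    funext v
    refine Finset.sum_congr rfl fun x _ => ?_
    split_ifs <;> simp [hm]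
  rw [e1, e2]
  -- entropy rewrites
  have R1 : ent (fun xw : ι × W => p xw.1 xw.2)
      = -∑ x, ∑ w, p x w * Real.log (p x w) := by
    rw [ent, Fintype.sum_prod_type]
  have R2 : ent q = -∑ x, ∑ w, p x w * Real.log (q w) := by
    rw [ent]
    congr 1
    rw [Finset.sum_comm]
    refine Finset.sum_congr rfl fun w _ => ?_
    rw [← Finset.sum_mul]
  have R3 : ent m = -∑ x, ∑ w, p x w * Real.log (m x) := by
    rw [ent]
    congr 1
    refine Finset.sum_congr rfl fun x _ => ?_
    rw [← Finset.sum_mul]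
  have R4 : ent aa = -∑ x, ∑ w, p x w * Real.log (aa (πA x)) := by
    rw [ent]
    congr 1
    rw [collapse πA m (fun u => Real.log (aa u))]
    refine Finset.sum_congr rfl fun x _ => ?_
    rw [← Finset.sum_mul]
  have R5 : ent bb = -∑ x, ∑ w, p x w * Real.log (bb (πB x)) := by
    rw [ent]
    congr 1
    rw [collapse πB m (fun v => Real.log (bb v))]
    refine Finset.sum_congr rfl fun x _ => ?_
    rw [← Finset.sum_mul]
  -- Gibbs sums
  have G1 : ∑ x, ∑ w, p x w * Real.log (m x * a' (πA x) w / aa (πA x) / p x w) ≤ 0 := by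
    refine gibbs2 p (fun x w => m x * a' (πA x) w / aa (πA x)) hp0
      (fun x w => div_nonneg (mul_nonneg (hm0 x) (ha'0 _ w)) (haa0 _)) ?_ ?_
    · refine Finset.sum_le_sum fun x _ => ?_
      have : ∑ w, m x * a' (πA x) w / aa (πA x) = m x * aa (πA x) / aa (πA x) := by
        rw [← haaw, Finset.mul_sum, Finset.sum_div]
      rw [this]
      rcases eq_or_lt_of_le (haa0 (πA x)) with h | h
      · rw [← h, div_zero]
        exact Finset.sum_nonneg fun w _ => hp0 x w
      · rw [mul_div_assoc, div_self (ne_of_gt h), mul_one]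
    · intro x w hz
      have h1 : 0 < m x := lt_of_lt_of_le hz (hpm x w)
      have h2 : 0 < a' (πA x) w := lt_of_lt_of_le hz (hpa' x w)
      have h3 : 0 < aa (πA x) := lt_of_lt_of_le h1 (hmaa x)
      positivity
  have G2 : ∑ x, ∑ w, p x w * Real.log (m x * b' (πB x) w / bb (πB x) / p x w) ≤ 0 := by
    refine gibbs2 p (fun x w => m x * b' (πB x) w / bb (πB x)) hp0
      (fun x w => div_nonneg (mul_nonneg (hm0 x) (hb'0 _ w)) (hbb0 _)) ?_ ?_
    · refine Finset.sum_le_sum fun x _ => ?_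
      have : ∑ w, m x * b' (πB x) w / bb (πB x) = m x * bb (πB x) / bb (πB x) := by
        rw [← hbbw, Finset.mul_sum, Finset.sum_div]
      rw [this]
      rcases eq_or_lt_of_le (hbb0 (πB x)) with h | h
      · rw [← h, div_zero]
        exact Finset.sum_nonneg fun w _ => hp0 x w
      · rw [mul_div_assoc, div_self (ne_of_gt h), mul_one]
    · intro x w hz
      have h1 : 0 < m x := lt_of_lt_of_le hz (hpm x w)
      have h2 : 0 < b' (πB x) w := lt_of_lt_of_le hz (hpb' x w)
      have h3 : 0 < bb (πB x) := lt_of_lt_of_le h1 (hmbb x)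
      positivity
  -- key pointwise identity
  have keyEq : ∀ x w,
      p x w * Real.log (m x * a' (πA x) w / aa (πA x) / p x w)
        + p x w * Real.log (m x * b' (πB x) w / bb (πB x) / p x w)
      = p x w * Real.log (m x) + p x w * Real.log (m x) + p x w * Real.log (q w)
        - p x w * Real.log (aa (πA x)) - p x w * Real.log (bb (πB x))
        - p x w * Real.log (p x w) := by
    intro x w
    rcases eq_or_lt_of_le (hp0 x w) with h | h
    · simp [← h]
    · have h1 : 0 < m x := lt_of_lt_of_le h (hpm x w)
      have h2 : 0 < a' (πA x) w := lt_of_lt_of_le h (hpa' x w)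
      have h2' : 0 < b' (πB x) w := lt_of_lt_of_le h (hpb' x w)
      have h3 : 0 < aa (πA x) := lt_of_lt_of_le h1 (hmaa x)
      have h3' : 0 < bb (πB x) := lt_of_lt_of_le h1 (hmbb x)
      have h4 : 0 < q w := lt_of_lt_of_le h (hpq x w)
      have hlogCI : Real.log (p x w) + Real.log (q w)
          = Real.log (a' (πA x) w) + Real.log (b' (πB x) w) := by
        have := hCI x w
        have hL : Real.log (p x w * q w) = Real.log (a' (πA x) w * b' (πB x) w) := by
          rw [this]
        rwa [Real.log_mul (ne_of_gt h) (ne_of_gt h4),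
          Real.log_mul (ne_of_gt h2) (ne_of_gt h2')] at hL
      have l1 : Real.log (m x * a' (πA x) w / aa (πA x) / p x w)
          = Real.log (m x) + Real.log (a' (πA x) w) - Real.log (aa (πA x))
            - Real.log (p x w) := by
        rw [Real.log_div (by positivity) (ne_of_gt h),
          Real.log_div (by positivity) (ne_of_gt h3),
          Real.log_mul (ne_of_gt h1) (ne_of_gt h2)]
      have l2 : Real.log (m x * b' (πB x) w / bb (πB x) / p x w)
          = Real.log (m x) + Real.log (b' (πB x) w) - Real.log (bb (πB x))
            - Real.log (p x w) := by
        rw [Real.log_div (by positivity) (ne_of_gt h),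
          Real.log_div (by positivity) (ne_of_gt h3'),
          Real.log_mul (ne_of_gt h1) (ne_of_gt h2')]
      rw [l1, l2]
      nlinarith [hlogCI]
  have keySum :
      (∑ x, ∑ w, p x w * Real.log (m x * a' (πA x) w / aa (πA x) / p x w))
        + (∑ x, ∑ w, p x w * Real.log (m x * b' (πB x) w / bb (πB x) / p x w))
      = (∑ x, ∑ w, p x w * Real.log (m x)) + (∑ x, ∑ w, p x w * Real.log (m x))
        + (∑ x, ∑ w, p x w * Real.log (q w))
        - (∑ x, ∑ w, p x w * Real.log (aa (πA x)))
        - (∑ x, ∑ w, p x w * Real.log (bb (πB x)))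
        - (∑ x, ∑ w, p x w * Real.log (p x w)) := by
    have step1 : (∑ x, ∑ w, p x w * Real.log (m x * a' (πA x) w / aa (πA x) / p x w))
        + (∑ x, ∑ w, p x w * Real.log (m x * b' (πB x) w / bb (πB x) / p x w))
        = ∑ x, ∑ w, (p x w * Real.log (m x) + p x w * Real.log (m x)
            + p x w * Real.log (q w) - p x w * Real.log (aa (πA x))
            - p x w * Real.log (bb (πB x)) - p x w * Real.log (p x w)) := by
      rw [← Finset.sum_add_distrib]
      refine Finset.sum_congr rfl fun x _ => ?_
      rw [← Finset.sum_add_distrib]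
      exact Finset.sum_congr rfl fun w _ => keyEq x w
    rw [step1]
    simp only [Finset.sum_add_distrib, Finset.sum_sub_distrib]
  rw [R1, R2, R3, R4, R5]
  linarith [G1, G2, keySum]

lemma prod_univ_congr {α : Type*} {M : Type*} [CommMonoid M] (i1 i2 : Fintype α)
    (g : α → M) :
    (@Finset.univ α i1).prod g = (@Finset.univ α i2).prod g := by
  rw [Subsingleton.elim i1 i2]

set_option maxHeartbeats 2000000 in
/-- If `X₁, …, X_N` are conditionally independent given `W`, then for every
index set `A` (with complement `Ā`), `I(X₁,…,X_N;W) ≥ I(X^A; X^Ā)`. -/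
theorem ci_ge_subset_mutual_information
    {N : ℕ} {𝒳 : Fin N → Type} [∀ i, Fintype (𝒳 i)] [∀ i, DecidableEq (𝒳 i)]
    {n : ℕ}
    (p : (∀ i, 𝒳 i) × Fin n → ℝ) (hp : IsPMF p)
    (hci : ∀ (x : ∀ i, 𝒳 i) (w : Fin n),
      p (x, w) * (∑ y, p (y, w)) ^ (N - 1)
        = ∏ i, (∑ y : ∀ i, 𝒳 i, if y i = x i then p (y, w) else 0))
    (A : Finset (Fin N)) :
    ent (fun u : ∀ i : {i // i ∈ A}, 𝒳 i =>
        ∑ x : ∀ i, 𝒳 i, ∑ w, if (∀ i : {i // i ∈ A}, x i = u i) then p (x, w) else 0)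
      + ent (fun v : ∀ i : {i // i ∉ A}, 𝒳 i =>
        ∑ x : ∀ i, 𝒳 i, ∑ w, if (∀ i : {i // i ∉ A}, x i = v i) then p (x, w) else 0)
      - ent (fun x : ∀ i, 𝒳 i => ∑ w, p (x, w))
    ≤ ent (fun x : ∀ i, 𝒳 i => ∑ w, p (x, w))
      + ent (fun w => ∑ x : ∀ i, 𝒳 i, p (x, w))
      - ent p := by
  classical
  obtain ⟨hp0, -⟩ := hp
  set πA : (∀ i, 𝒳 i) → (∀ i : {i // i ∈ A}, 𝒳 i) := fun x i => x i with hπA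
  set πB : (∀ i, 𝒳 i) → (∀ i : {i // i ∉ A}, 𝒳 i) := fun x i => x i with hπB
  have hCI : ∀ (x : ∀ i, 𝒳 i) (w : Fin n),
      (fun x w => p (x, w)) x w * (∑ y, (fun x w => p (x, w)) y w)
      = (∑ y, if πA y = πA x then (fun x w => p (x, w)) y w else 0)
        * (∑ y, if πB y = πB x then (fun x w => p (x, w)) y w else 0) := by
    intro x w
    dsimp only
    rcases Nat.eq_zero_or_pos N with hN | hN
    · -- trivial case `N = 0`
      have hxy : ∀ y : (∀ i, 𝒳 i), y = x := fun y =>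
        funext fun i => absurd i.isLt (by omega)
      have hqx : ∑ y, p (y, w) = p (x, w) :=
        Finset.sum_eq_single_of_mem x (Finset.mem_univ x)
          (fun b _ hb => absurd (hxy b) hb)
      have hA : (∑ y, if πA y = πA x then p (y, w) else 0) = ∑ y, p (y, w) :=
        Finset.sum_congr rfl fun y _ => if_pos (by rw [hxy y])
      have hB : (∑ y, if πB y = πB x then p (y, w) else 0) = ∑ y, p (y, w) :=
        Finset.sum_congr rfl fun y _ => if_pos (by rw [hxy y])
      rw [hA, hB, hqx]
    · by_cases hq : (∑ y, p (y, w)) = 0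
      · have hz : ∀ y, p (y, w) = 0 := by
          intro y
          exact (Finset.sum_eq_zero_iff_of_nonneg (fun y _ => hp0 (y, w))).mp hq y
            (Finset.mem_univ y)
        have hA : (∑ y, if πA y = πA x then p (y, w) else 0) = 0 :=
          Finset.sum_eq_zero fun y _ => by simp [hz y]
        rw [hz x, hA, zero_mul, zero_mul]
      · set Q := ∑ y, p (y, w) with hQ
        set f : ∀ i, 𝒳 i → ℝ := fun i t => ∑ y, if y i = t then p (y, w) else 0 with hf
        have hprod : ∀ y, p (y, w) * Q ^ (N - 1) = ∏ i, f i (y i) := fun y => hci y w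
        have hfsum : ∀ i, ∑ t, f i t = Q := by
          intro i
          show (∑ t, ∑ y, if y i = t then p (y, w) else 0) = Q
          rw [Finset.sum_comm]
          refine Finset.sum_congr rfl fun y _ => ?_
          simp
        set e := Equiv.piEquivPiSubtypeProd (fun i => i ∈ A) 𝒳 with he
        have hesymmA : ∀ (z) (i : {i // i ∈ A}), e.symm z (i : Fin N) = z.1 i :=
          fun z i => dif_pos i.2
        have hesymmB : ∀ (z) (i : {i // i ∉ A}), e.symm z (i : Fin N) = z.2 i :=
          fun z i => dif_neg i.2
        have heπ : ∀ y, e y = (πA y, πB y) := fun y => rfl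
        have hexA : ∀ z, πA (e.symm z) = z.1 := by
          intro z
          have h := congrArg Prod.fst (e.apply_symm_apply z)
          rwa [heπ] at h
        have hexB : ∀ z, πB (e.symm z) = z.2 := by
          intro z
          have h := congrArg Prod.snd (e.apply_symm_apply z)
          rwa [heπ] at h
        have hsplit : ∀ y : (∀ i, 𝒳 i), (∏ i, f i (y i))
            = (∏ i : {i // i ∈ A}, f i (y i)) * (∏ i : {i // i ∉ A}, f i (y i)) := by
          intro y
          rw [← Fintype.prod_subtype_mul_prod_subtype (fun i => i ∈ A)
            (fun i => f i (y i))]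
          exact congrArg₂ (· * ·) (prod_univ_congr _ _ _) (prod_univ_congr _ _ _)
        have hcard : Fintype.card {i // i ∈ A} + Fintype.card {i // i ∉ A} = N := by
          have h := Fintype.card_congr (Equiv.sumCompl (fun i : Fin N => i ∈ A))
          rw [Fintype.card_sum, Fintype.card_fin] at h
          exact h
        have claimA : ∀ u, (∑ y, if πA y = u then p (y, w) else 0) * Q ^ (N - 1)
            = (∏ i : {i // i ∈ A}, f i (u i)) * Q ^ (Fintype.card {i // i ∉ A}) := by
          intro u
          rw [Finset.sum_mul]
          calc ∑ y, (if πA y = u then p (y, w) else 0) * Q ^ (N - 1)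
              = ∑ y, (if πA y = u then (∏ i : {i // i ∈ A}, f i (y i))
                  * (∏ i : {i // i ∉ A}, f i (y i)) else 0) := by
                refine Finset.sum_congr rfl fun y _ => ?_
                rw [ite_mul, zero_mul, hprod y, hsplit y]
            _ = ∑ z : (∀ i : {i // i ∈ A}, 𝒳 i) × (∀ i : {i // i ∉ A}, 𝒳 i),
                  (if πA (e.symm z) = u then (∏ i : {i // i ∈ A}, f i (e.symm z i))
                    * (∏ i : {i // i ∉ A}, f i (e.symm z i)) else 0) :=
                (Equiv.sum_comp e.symm fun y => if πA y = u
                  then (∏ i : {i // i ∈ A}, f i (y i))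
                    * (∏ i : {i // i ∉ A}, f i (y i)) else 0).symm
            _ = ∑ z : (∀ i : {i // i ∈ A}, 𝒳 i) × (∀ i : {i // i ∉ A}, 𝒳 i),
                  (if z.1 = u then (∏ i : {i // i ∈ A}, f i (z.1 i))
                    * (∏ i : {i // i ∉ A}, f i (z.2 i)) else 0) := by
                refine Finset.sum_congr rfl fun z _ => ?_
                have h1 : (∏ i : {i // i ∈ A}, f i (e.symm z i))
                    = ∏ i : {i // i ∈ A}, f i (z.1 i) :=
                  Finset.prod_congr rfl fun i _ => by rw [hesymmA z i]
                have h2 : (∏ i : {i // i ∉ A}, f i (e.symm z i))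
                    = ∏ i : {i // i ∉ A}, f i (z.2 i) :=
                  Finset.prod_congr rfl fun i _ => by rw [hesymmB z i]
                rw [hexA z, h1, h2]
            _ = ∑ u' : ∀ i : {i // i ∈ A}, 𝒳 i, ∑ v : ∀ i : {i // i ∉ A}, 𝒳 i,
                  (if u' = u then (∏ i : {i // i ∈ A}, f i (u' i))
                  * (∏ i : {i // i ∉ A}, f i (v i)) else 0) := by
                rw [Fintype.sum_prod_type]
            _ = ∑ u' : ∀ i : {i // i ∈ A}, 𝒳 i,
                  (if u' = u then ∑ v : ∀ i : {i // i ∉ A}, 𝒳 i,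
                  (∏ i : {i // i ∈ A}, f i (u' i))
                  * (∏ i : {i // i ∉ A}, f i (v i)) else 0) := by
                refine Finset.sum_congr rfl fun u' _ => ?_
                split_ifs <;> simp
            _ = ∑ v : ∀ i : {i // i ∉ A}, 𝒳 i, (∏ i : {i // i ∈ A}, f i (u i))
                  * (∏ i : {i // i ∉ A}, f i (v i)) := by
                rw [Finset.sum_ite_eq' Finset.univ u]
                simp
            _ = (∏ i : {i // i ∈ A}, f i (u i))
                  * ∑ v : ∀ i : {i // i ∉ A}, 𝒳 i,
                  (∏ i : {i // i ∉ A}, f i (v i)) := by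
                rw [← Finset.mul_sum]
            _ = (∏ i : {i // i ∈ A}, f i (u i)) * Q ^ (Fintype.card {i // i ∉ A}) := by
                congr 1
                rw [← Fintype.piFinset_univ, ← Finset.prod_univ_sum]
                calc (∏ i : {i // i ∉ A}, ∑ t, f i t) = ∏ _i : {i // i ∉ A}, Q :=
                      Finset.prod_congr rfl fun i _ => hfsum i
                  _ = Q ^ (Fintype.card {i // i ∉ A}) := by
                      rw [Finset.prod_const, Finset.card_univ]
        have claimB : ∀ v, (∑ y, if πB y = v then p (y, w) else 0) * Q ^ (N - 1)
            = (∏ i : {i // i ∉ A}, f i (v i)) * Q ^ (Fintype.card {i // i ∈ A}) := by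
          intro v
          rw [Finset.sum_mul]
          calc ∑ y, (if πB y = v then p (y, w) else 0) * Q ^ (N - 1)
              = ∑ y, (if πB y = v then (∏ i : {i // i ∈ A}, f i (y i))
                  * (∏ i : {i // i ∉ A}, f i (y i)) else 0) := by
                refine Finset.sum_congr rfl fun y _ => ?_
                rw [ite_mul, zero_mul, hprod y, hsplit y]
            _ = ∑ z : (∀ i : {i // i ∈ A}, 𝒳 i) × (∀ i : {i // i ∉ A}, 𝒳 i),
                  (if πB (e.symm z) = v then (∏ i : {i // i ∈ A}, f i (e.symm z i))
                    * (∏ i : {i // i ∉ A}, f i (e.symm z i)) else 0) :=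
                (Equiv.sum_comp e.symm fun y => if πB y = v
                  then (∏ i : {i // i ∈ A}, f i (y i))
                    * (∏ i : {i // i ∉ A}, f i (y i)) else 0).symm
            _ = ∑ z : (∀ i : {i // i ∈ A}, 𝒳 i) × (∀ i : {i // i ∉ A}, 𝒳 i),
                  (if z.2 = v then (∏ i : {i // i ∈ A}, f i (z.1 i))
                    * (∏ i : {i // i ∉ A}, f i (z.2 i)) else 0) := by
                refine Finset.sum_congr rfl fun z _ => ?_
                have h1 : (∏ i : {i // i ∈ A}, f i (e.symm z i))
                    = ∏ i : {i // i ∈ A}, f i (z.1 i) :=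
                  Finset.prod_congr rfl fun i _ => by rw [hesymmA z i]
                have h2 : (∏ i : {i // i ∉ A}, f i (e.symm z i))
                    = ∏ i : {i // i ∉ A}, f i (z.2 i) :=
                  Finset.prod_congr rfl fun i _ => by rw [hesymmB z i]
                rw [hexB z, h1, h2]
            _ = ∑ v' : ∀ i : {i // i ∉ A}, 𝒳 i, ∑ u' : ∀ i : {i // i ∈ A}, 𝒳 i,
                  (if v' = v then (∏ i : {i // i ∈ A}, f i (u' i))
                  * (∏ i : {i // i ∉ A}, f i (v' i)) else 0) := by
                rw [Fintype.sum_prod_type]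
                exact Finset.sum_comm
            _ = ∑ v' : ∀ i : {i // i ∉ A}, 𝒳 i,
                  (if v' = v then ∑ u' : ∀ i : {i // i ∈ A}, 𝒳 i,
                  (∏ i : {i // i ∈ A}, f i (u' i))
                  * (∏ i : {i // i ∉ A}, f i (v' i)) else 0) := by
                refine Finset.sum_congr rfl fun v' _ => ?_
                split_ifs <;> simp
            _ = ∑ u' : ∀ i : {i // i ∈ A}, 𝒳 i, (∏ i : {i // i ∈ A}, f i (u' i))
                  * (∏ i : {i // i ∉ A}, f i (v i)) := by
                rw [Finset.sum_ite_eq' Finset.univ v]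
                simp
            _ = (∏ i : {i // i ∉ A}, f i (v i))
                  * ∑ u' : ∀ i : {i // i ∈ A}, 𝒳 i,
                  (∏ i : {i // i ∈ A}, f i (u' i)) := by
                rw [Finset.mul_sum]
                refine Finset.sum_congr rfl fun u' _ => mul_comm _ _
            _ = (∏ i : {i // i ∉ A}, f i (v i)) * Q ^ (Fintype.card {i // i ∈ A}) := by
                congr 1
                rw [← Fintype.piFinset_univ, ← Finset.prod_univ_sum]
                calc (∏ i : {i // i ∈ A}, ∑ t, f i t) = ∏ _i : {i // i ∈ A}, Q :=
                      Finset.prod_congr rfl fun i _ => hfsum i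
                  _ = Q ^ (Fintype.card {i // i ∈ A}) := by
                      rw [Finset.prod_const, Finset.card_univ]
        -- combine
        have h1 := claimA (πA x)
        have h2 := claimB (πB x)
        have h1' : (∏ i : {i // i ∈ A}, f i (πA x i)) = ∏ i : {i // i ∈ A}, f i (x i) :=
          Finset.prod_congr rfl fun i _ => rfl
        have h2' : (∏ i : {i // i ∉ A}, f i (πB x i)) = ∏ i : {i // i ∉ A}, f i (x i) :=
          Finset.prod_congr rfl fun i _ => rfl
        rw [h1'] at h1
        rw [h2'] at h2
        have hmul : ((∑ y, if πA y = πA x then p (y, w) else 0)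
              * (∑ y, if πB y = πB x then p (y, w) else 0))
              * (Q ^ (N - 1) * Q ^ (N - 1))
            = (p (x, w) * Q) * (Q ^ (N - 1) * Q ^ (N - 1)) := by
          calc ((∑ y, if πA y = πA x then p (y, w) else 0)
                * (∑ y, if πB y = πB x then p (y, w) else 0))
                * (Q ^ (N - 1) * Q ^ (N - 1))
              = ((∑ y, if πA y = πA x then p (y, w) else 0) * Q ^ (N - 1))
                * ((∑ y, if πB y = πB x then p (y, w) else 0) * Q ^ (N - 1)) := by ring
            _ = ((∏ i : {i // i ∈ A}, f i (x i)) * Q ^ (Fintype.card {i // i ∉ A}))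
                * ((∏ i : {i // i ∉ A}, f i (x i)) * Q ^ (Fintype.card {i // i ∈ A})) := by
                rw [h1, h2]
            _ = ((∏ i : {i // i ∈ A}, f i (x i)) * (∏ i : {i // i ∉ A}, f i (x i)))
                * Q ^ (Fintype.card {i // i ∈ A} + Fintype.card {i // i ∉ A}) := by
                rw [pow_add]; ring
            _ = (∏ i, f i (x i)) * Q ^ N := by rw [← hsplit x, hcard]
            _ = (p (x, w) * Q ^ (N - 1)) * Q ^ N := by rw [hprod x]
            _ = (p (x, w) * Q) * (Q ^ (N - 1) * Q ^ (N - 1)) := by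
                rw [show Q ^ N = Q ^ (N - 1) * Q from by
                  rw [← pow_succ]; congr 1; omega]
                ring
        have hQne : Q ^ (N - 1) * Q ^ (N - 1) ≠ 0 :=
          mul_ne_zero (pow_ne_zero _ hq) (pow_ne_zero _ hq)
        exact (mul_right_cancel₀ hQne hmul).symm
  have main := main_ineq (fun x w => p (x, w)) πA πB (fun x w => hp0 (x, w)) hCI
  have eA : (fun u : ∀ i : {i // i ∈ A}, 𝒳 i =>
        ∑ x : ∀ i, 𝒳 i, ∑ w, if (∀ i : {i // i ∈ A}, x i = u i) then p (x, w) else 0)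
      = (fun u => ∑ x : ∀ i, 𝒳 i, ∑ w, if πA x = u then p (x, w) else 0) := by
    funext u
    refine Finset.sum_congr rfl fun x _ => Finset.sum_congr rfl fun w _ => ?_
    exact if_congr funext_iff.symm rfl rfl
  have eB : (fun v : ∀ i : {i // i ∉ A}, 𝒳 i =>
        ∑ x : ∀ i, 𝒳 i, ∑ w, if (∀ i : {i // i ∉ A}, x i = v i) then p (x, w) else 0)
      = (fun v => ∑ x : ∀ i, 𝒳 i, ∑ w, if πB x = v then p (x, w) else 0) := by
    funext v
    refine Finset.sum_congr rfl fun x _ => Finset.sum_congr rfl fun w _ => ?_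
    exact if_congr funext_iff.symm rfl rfl
  have eP : (fun xw : (∀ i, 𝒳 i) × Fin n => p (xw.1, xw.2)) = p :=
    funext fun xw => rfl
  rw [eA, eB]
  rw [eP] at main
  exact main
end

section
/- Let S ~ Bernoulli(θ) and let X₁,...,X_N be outputs of N independent binary symmetric channels with crossover probability a₁ ∈ [0,1/2] and common input S. If S achieves the common information of every pair (i.e., C(Xₖ,Xⱼ) = I(Xₖ,Xⱼ;S) for all k≠j), then C(X₁,...,X_N) = I(X₁,...,X_N;S). -/
open scoped BigOperators

/-- Wyner's common information of a finite collection of random variables with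
joint pmf `p`: the infimum of `I(X;W)` over auxiliary variables `W` (on finite
alphabets) rendering the coordinates mutually conditionally independent. -/
noncomputable def wynerCI {ι : Type} [Fintype ι] [DecidableEq ι]
    {𝒳 : ι → Type} [∀ i, Fintype (𝒳 i)] [∀ i, DecidableEq (𝒳 i)]
    (p : (∀ i, 𝒳 i) → ℝ) : ℝ :=
  sInf {r : ℝ | ∃ n : ℕ, ∃ q : (∀ i, 𝒳 i) × Fin n → ℝ, IsPMF q ∧
    (∀ x, (∑ w, q (x, w)) = p x) ∧
    (∀ x w, q (x, w) * (∑ y, q (y, w)) ^ (Fintype.card ι - 1)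
        = ∏ i, (∑ y : ∀ i, 𝒳 i, if y i = x i then q (y, w) else 0)) ∧
    r = ent (fun x : ∀ i, 𝒳 i => ∑ w, q (x, w))
        + ent (fun w => ∑ x : ∀ i, 𝒳 i, q (x, w)) - ent q}

/-- BSC transition probability. -/
noncomputable def bsc (a : ℝ) (s x : Bool) : ℝ := if x = s then 1 - a else a

/-- Input pmf: `P(S = true) = θ`. -/
noncomputable def pS (θ : ℝ) (s : Bool) : ℝ := if s then θ else 1 - θ

/-- Joint pmf of `(X₁,…,X_N, S)`: `S ~ Bern(θ)` and the `Xᵢ` are outputs of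
independent BSC(`a₁`) channels with common input `S`. -/
noncomputable def pFull (N : ℕ) (θ a₁ : ℝ) : (Fin N → Bool) × Bool → ℝ :=
  fun z => pS θ z.2 * ∏ i, bsc a₁ z.2 (z.1 i)

/-- Joint pmf of `(X_k, X_j, S)`. -/
noncomputable def pPairS (N : ℕ) (θ a₁ : ℝ) (k j : Fin N) :
    (Fin 2 → Bool) × Bool → ℝ :=
  fun z => ∑ x : Fin N → Bool,
    if x k = z.1 0 ∧ x j = z.1 1 then pFull N θ a₁ (x, z.2) else 0


open Finset


section Helpers

variable {M : ℕ} {W : Type} [Fintype W]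

/-- sum over pi of product = product of sums -/
lemma sum_pi_prod (g : Fin M → Bool → ℝ) :
    ∑ x : Fin M → Bool, ∏ i, g i (x i) = ∏ i, ∑ b, g i b := by
  rw [Finset.prod_univ_sum]
  rw [Fintype.piFinset_univ]

lemma sum_ite_pi_one (g : Fin M → Bool → ℝ) (k : Fin M) (b : Bool) :
    ∑ x : Fin M → Bool, (if x k = b then ∏ i, g i (x i) else 0)
      = g k b * ∏ i ∈ Finset.univ.erase k, (∑ c, g i c) := by
  classical
  set g' : Fin M → Bool → ℝ :=
    fun i y => if i = k then (if y = b then g i y else 0) else g i y with hg'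
  have h1 : ∀ x : Fin M → Bool,
      (if x k = b then ∏ i, g i (x i) else 0) = ∏ i, g' i (x i) := by
    intro x
    by_cases hx : x k = b
    · simp only [if_pos hx]
      refine Finset.prod_congr rfl ?_
      intro i _
      by_cases hik : i = k
      · subst hik; simp [hg', hx]
      · simp [hg', hik]
    · simp only [if_neg hx]
      symm
      apply Finset.prod_eq_zero (Finset.mem_univ k)
      simp [hg', hx]
  rw [Finset.sum_congr rfl (fun x _ => h1 x), sum_pi_prod g']
  rw [← Finset.mul_prod_erase Finset.univ _ (Finset.mem_univ k)]
  congr 1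
  · simp [hg']
  · refine Finset.prod_congr rfl ?_
    intro i hi
    have : i ≠ k := Finset.ne_of_mem_erase hi
    simp [hg', this]

lemma sum_ite_pi_two (g : Fin M → Bool → ℝ) (k j : Fin M) (hkj : k ≠ j) (b₀ b₁ : Bool) :
    ∑ x : Fin M → Bool, (if x k = b₀ ∧ x j = b₁ then ∏ i, g i (x i) else 0)
      = g k b₀ * g j b₁ * ∏ i ∈ (Finset.univ.erase k).erase j, (∑ c, g i c) := by
  classical
  set g' : Fin M → Bool → ℝ :=
    fun i y => if i = k then (if y = b₀ then g i y else 0)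
            else if i = j then (if y = b₁ then g i y else 0) else g i y with hg'
  have h1 : ∀ x : Fin M → Bool,
      (if x k = b₀ ∧ x j = b₁ then ∏ i, g i (x i) else 0) = ∏ i, g' i (x i) := by
    intro x
    by_cases hx : x k = b₀ ∧ x j = b₁
    · simp only [if_pos hx]
      refine Finset.prod_congr rfl ?_
      intro i _
      by_cases hik : i = k
      · subst hik; simp [hg', hx.1]
      · by_cases hij : i = j
        · subst hij; simp [hg', hik, hx.2]
        · simp [hg', hik, hij]
    · simp only [if_neg hx]
      symm
      rcases (not_and_or.mp hx) with h | h
      · apply Finset.prod_eq_zero (Finset.mem_univ k); simp [hg', h]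
      · apply Finset.prod_eq_zero (Finset.mem_univ j); simp [hg', h, (Ne.symm hkj)]
  rw [Finset.sum_congr rfl (fun x _ => h1 x), sum_pi_prod g']
  have hjmem : j ∈ Finset.univ.erase k := by
    simp [Ne.symm hkj]
  rw [← Finset.mul_prod_erase Finset.univ _ (Finset.mem_univ k),
      ← Finset.mul_prod_erase _ _ hjmem, ← mul_assoc]
  congr 1
  · congr 1
    · simp [hg']
    · simp [hg', Ne.symm hkj]
  · refine Finset.prod_congr rfl ?_
    intro i hi
    have hij : i ≠ j := Finset.ne_of_mem_erase hi
    have hik : i ≠ k := Finset.ne_of_mem_erase (Finset.mem_of_mem_erase hi)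
    simp [hg', hik, hij]

end Helpers

open scoped BigOperators
open Finset

noncomputable def margW {M : ℕ} {W : Type} [Fintype W]
    (q : (Fin M → Bool) × W → ℝ) (w : W) : ℝ := ∑ y, q (y, w)

noncomputable def margI {M : ℕ} {W : Type} [Fintype W]
    (q : (Fin M → Bool) × W → ℝ) (i : Fin M) (z : Bool × W) : ℝ :=
  ∑ y, if y i = z.1 then q (y, z.2) else 0

section Decomp
variable {M : ℕ} {W : Type} [Fintype W]

lemma margI_nonneg (q : (Fin M → Bool) × W → ℝ) (hq : ∀ z, 0 ≤ q z) (i : Fin M)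
    (z : Bool × W) : 0 ≤ margI q i z := by
  refine Finset.sum_nonneg (fun y _ => ?_)
  split
  · exact hq _
  · exact le_refl 0

lemma le_margI (q : (Fin M → Bool) × W → ℝ) (hq : ∀ z, 0 ≤ q z) (i : Fin M)
    (x : Fin M → Bool) (w : W) : q (x, w) ≤ margI q i (x i, w) := by
  have h : ∀ y : Fin M → Bool, y ∈ Finset.univ →
      (0:ℝ) ≤ if y i = x i then q (y, w) else 0 := by
    intro y _
    split
    · exact hq _
    · exact le_refl 0
  have := Finset.single_le_sum h (Finset.mem_univ x)
  simpa [margI] using this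

lemma le_margW (q : (Fin M → Bool) × W → ℝ) (hq : ∀ z, 0 ≤ q z)
    (x : Fin M → Bool) (w : W) : q (x, w) ≤ margW q w :=
  Finset.single_le_sum (f := fun y => q (y, w)) (fun y _ => hq _) (Finset.mem_univ x)

lemma margW_nonneg (q : (Fin M → Bool) × W → ℝ) (hq : ∀ z, 0 ≤ q z) (w : W) :
    0 ≤ margW q w := Finset.sum_nonneg (fun y _ => hq _)

lemma sum_margI (q : (Fin M → Bool) × W → ℝ) (i : Fin M) (w : W) :
    ∑ b, margI q i (b, w) = margW q w := by
  unfold margI margW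
  rw [Finset.sum_comm]
  congr 1; funext y
  simp

/-- Key entropy decomposition under the conditional-independence identity. -/
lemma ent_decomp (e : ℕ) (q : (Fin M → Bool) × W → ℝ) (hq : ∀ z, 0 ≤ q z)
    (hci : ∀ x w, q (x, w) * (margW q w) ^ e = ∏ i, margI q i (x i, w)) :
    ent q = (∑ i, ent (margI q i)) - (e : ℝ) * ent (margW q) := by
  have key : ∀ x w, q (x, w) * Real.log (q (x, w))
      = q (x, w) * ((∑ i, Real.log (margI q i (x i, w))) - (e : ℝ) * Real.log (margW q w)) := by
    intro x w
    rcases eq_or_lt_of_le (hq (x, w)) with h0 | hpos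
    · rw [← h0]; ring
    · have hW : 0 < margW q w := lt_of_lt_of_le hpos (le_margW q hq x w)
      have hI : ∀ i, 0 < margI q i (x i, w) :=
        fun i => lt_of_lt_of_le hpos (le_margI q hq i x w)
      have hlog := congrArg Real.log (hci x w)
      rw [Real.log_mul (ne_of_gt hpos) (pow_ne_zero _ (ne_of_gt hW)),
          Real.log_pow,
          Real.log_prod (fun i _ => ne_of_gt (hI i))] at hlog
      have : Real.log (q (x, w))
          = (∑ i, Real.log (margI q i (x i, w))) - (e : ℝ) * Real.log (margW q w) := by
        linarith
      rw [this]
  have hxsum : ∀ w : W, ∑ x : Fin M → Bool, q (x, w) * Real.log (q (x, w))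
      = (∑ i, ∑ b, margI q i (b, w) * Real.log (margI q i (b, w)))
        - (e : ℝ) * (margW q w * Real.log (margW q w)) := by
    intro w
    calc ∑ x : Fin M → Bool, q (x, w) * Real.log (q (x, w))
        = ∑ x : Fin M → Bool, ((∑ i, q (x, w) * Real.log (margI q i (x i, w)))
            - (e : ℝ) * (q (x, w) * Real.log (margW q w))) := by
          refine Finset.sum_congr rfl (fun x _ => ?_)
          rw [key x w, mul_sub, Finset.mul_sum]; ring
      _ = (∑ i, ∑ x : Fin M → Bool, q (x, w) * Real.log (margI q i (x i, w)))
            - (e : ℝ) * ((∑ x : Fin M → Bool, q (x, w)) * Real.log (margW q w)) := by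
          rw [Finset.sum_sub_distrib, Finset.sum_comm, ← Finset.mul_sum, Finset.sum_mul]
      _ = (∑ i, ∑ b, margI q i (b, w) * Real.log (margI q i (b, w)))
            - (e : ℝ) * (margW q w * Real.log (margW q w)) := by
          congr 1
          refine Finset.sum_congr rfl (fun i _ => ?_)
          have : ∀ x : Fin M → Bool, q (x, w) * Real.log (margI q i (x i, w))
              = ∑ b, if x i = b then q (x, w) * Real.log (margI q i (b, w)) else 0 := by
            intro x
            symm
            rw [Finset.sum_ite_eq]
            simp
          rw [Finset.sum_congr rfl (fun x _ => this x), Finset.sum_comm]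
          refine Finset.sum_congr rfl (fun b _ => ?_)
          unfold margI
          rw [Finset.sum_mul]
          refine Finset.sum_congr rfl (fun x _ => ?_)
          dsimp only
          split <;> simp
  have main : ∑ z : (Fin M → Bool) × W, q z * Real.log (q z)
      = (∑ i, ∑ z : Bool × W, margI q i z * Real.log (margI q i z))
        - (e : ℝ) * ∑ w, margW q w * Real.log (margW q w) := by
    rw [Fintype.sum_prod_type_right]
    rw [Finset.sum_congr rfl (fun w _ => hxsum w), Finset.sum_sub_distrib,
      Finset.sum_comm, ← Finset.mul_sum]
    congr 1
    refine Finset.sum_congr rfl (fun i _ => ?_)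
    rw [Fintype.sum_prod_type_right]
  unfold ent margW
  unfold ent margW at main
  rw [main]
  rw [Finset.sum_neg_distrib]
  ring
end Decomp

section PairMarg
variable {N : ℕ} {W : Type} [Fintype W]

/-- the pair marginal of `q` on coordinates `k, j`. -/
noncomputable def pairM (q : (Fin N → Bool) × W → ℝ) (k j : Fin N)
    (z : (Fin 2 → Bool) × W) : ℝ :=
  ∑ x : Fin N → Bool, if x k = z.1 0 ∧ x j = z.1 1 then q (x, z.2) else 0

lemma fin2_ext_iff (v u : Fin 2 → Bool) : v = u ↔ v 0 = u 0 ∧ v 1 = u 1 := by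
  constructor
  · rintro rfl; exact ⟨rfl, rfl⟩
  · rintro ⟨h0, h1⟩
    funext i
    fin_cases i
    · exact h0
    · exact h1

lemma pairM_nonneg (q : (Fin N → Bool) × W → ℝ) (hq : ∀ z, 0 ≤ q z) (k j : Fin N)
    (z : (Fin 2 → Bool) × W) : 0 ≤ pairM q k j z := by
  refine Finset.sum_nonneg (fun x _ => ?_)
  split
  · exact hq _
  · exact le_refl 0

lemma margW_pairM (q : (Fin N → Bool) × W → ℝ) (k j : Fin N) (w : W) :
    margW (pairM q k j) w = margW q w := by
  unfold margW pairM
  dsimp only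
  rw [Finset.sum_comm]
  refine Finset.sum_congr rfl (fun x _ => ?_)
  have : ∀ v : Fin 2 → Bool, (if x k = v 0 ∧ x j = v 1 then q (x, w) else 0)
      = (if v = ![x k, x j] then q (x, w) else 0) := by
    intro v
    congr 1
    rw [fin2_ext_iff]
    simp [eq_comm]
  rw [Finset.sum_congr rfl (fun v _ => this v), Finset.sum_ite_eq' Finset.univ]
  simp

lemma margI_pairM_zero (q : (Fin N → Bool) × W → ℝ) (k j : Fin N) (b : Bool) (w : W) :
    margI (pairM q k j) 0 (b, w) = ∑ x : Fin N → Bool, if x k = b then q (x, w) else 0 := by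
  unfold margI pairM
  dsimp only
  calc (∑ v : Fin 2 → Bool, if v 0 = b
          then (∑ x : Fin N → Bool, if x k = v 0 ∧ x j = v 1 then q (x, w) else 0) else 0)
      = ∑ v : Fin 2 → Bool, ∑ x : Fin N → Bool,
          (if v 0 = b ∧ x k = v 0 ∧ x j = v 1 then q (x, w) else 0) := by
        refine Finset.sum_congr rfl (fun v _ => ?_)
        by_cases h0 : v 0 = b
        · rw [if_pos h0]
          refine Finset.sum_congr rfl (fun x _ => ?_)
          simp [h0]
        · rw [if_neg h0]
          symm
          refine Finset.sum_eq_zero (fun x _ => ?_)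
          simp [h0]
    _ = ∑ x : Fin N → Bool, ∑ v : Fin 2 → Bool,
          (if v = ![b, x j] ∧ x k = b then q (x, w) else 0) := by
        rw [Finset.sum_comm]
        refine Finset.sum_congr rfl (fun x _ => Finset.sum_congr rfl (fun v _ => ?_))
        refine if_congr ?_ rfl rfl
        rw [fin2_ext_iff]
        simp only [Matrix.cons_val_zero, Matrix.cons_val_one, Matrix.head_cons]
        constructor
        · rintro ⟨h0, hk, hj⟩
          exact ⟨⟨h0, hj.symm⟩, h0 ▸ hk⟩
        · rintro ⟨⟨h0, h1⟩, hk⟩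
          exact ⟨h0, h0.symm ▸ hk, h1.symm⟩
    _ = ∑ x : Fin N → Bool, if x k = b then q (x, w) else 0 := by
        refine Finset.sum_congr rfl (fun x _ => ?_)
        by_cases hk : x k = b
        · simp [hk]
        · simp [hk]

lemma margI_pairM_one (q : (Fin N → Bool) × W → ℝ) (k j : Fin N) (b : Bool) (w : W) :
    margI (pairM q k j) 1 (b, w) = ∑ x : Fin N → Bool, if x j = b then q (x, w) else 0 := by
  unfold margI pairM
  dsimp only
  calc (∑ v : Fin 2 → Bool, if v 1 = b
          then (∑ x : Fin N → Bool, if x k = v 0 ∧ x j = v 1 then q (x, w) else 0) else 0)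
      = ∑ v : Fin 2 → Bool, ∑ x : Fin N → Bool,
          (if v 1 = b ∧ x k = v 0 ∧ x j = v 1 then q (x, w) else 0) := by
        refine Finset.sum_congr rfl (fun v _ => ?_)
        by_cases h0 : v 1 = b
        · rw [if_pos h0]
          refine Finset.sum_congr rfl (fun x _ => ?_)
          simp [h0]
        · rw [if_neg h0]
          symm
          refine Finset.sum_eq_zero (fun x _ => ?_)
          simp [h0]
    _ = ∑ x : Fin N → Bool, ∑ v : Fin 2 → Bool,
          (if v = ![x k, b] ∧ x j = b then q (x, w) else 0) := by
        rw [Finset.sum_comm]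
        refine Finset.sum_congr rfl (fun x _ => Finset.sum_congr rfl (fun v _ => ?_))
        refine if_congr ?_ rfl rfl
        rw [fin2_ext_iff]
        simp only [Matrix.cons_val_zero, Matrix.cons_val_one, Matrix.head_cons]
        constructor
        · rintro ⟨h1, hk, hj⟩
          exact ⟨⟨hk.symm, h1⟩, h1 ▸ hj⟩
        · rintro ⟨⟨h0, h1⟩, hj⟩
          exact ⟨h1, h0.symm, h1.symm ▸ hj⟩
    _ = ∑ x : Fin N → Bool, if x j = b then q (x, w) else 0 := by
        refine Finset.sum_congr rfl (fun x _ => ?_)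
        by_cases hj : x j = b
        · simp [hj]
        · simp [hj]

/-- marginal CI for the pair, valid whenever the full CI identity holds. -/
lemma pair_ci (q : (Fin N → Bool) × W → ℝ) (hq : ∀ z, 0 ≤ q z) (hN : 2 ≤ N)
    (k j : Fin N) (hkj : k ≠ j)
    (hci : ∀ x w, q (x, w) * (margW q w) ^ (N - 1) = ∏ i, margI q i (x i, w)) :
    ∀ (v : Fin 2 → Bool) (w : W), pairM q k j (v, w) * margW (pairM q k j) w
      = ∏ i : Fin 2, margI (pairM q k j) i (v i, w) := by
  intro v w
  rw [Fin.prod_univ_two]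
  -- sum the full CI identity over x with coordinates k, j fixed
  have hsum : (∑ x : Fin N → Bool, if x k = v 0 ∧ x j = v 1
        then q (x, w) * (margW q w) ^ (N - 1) else 0)
      = pairM q k j (v, w) * (margW q w) ^ (N - 1) := by
    unfold pairM
    rw [Finset.sum_mul]
    refine Finset.sum_congr rfl (fun x _ => ?_)
    split <;> simp
  have hsum2 : (∑ x : Fin N → Bool, if x k = v 0 ∧ x j = v 1
        then ∏ i, margI q i (x i, w) else 0)
      = margI q k (v 0, w) * margI q j (v 1, w) * (margW q w) ^ (N - 2) := by
    rw [sum_ite_pi_two (fun i b => margI q i (b, w)) k j hkj (v 0) (v 1)]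
    congr 1
    rw [Finset.prod_congr rfl (fun i _ => sum_margI q i w), Finset.prod_const]
    congr 1
    have hjmem : j ∈ Finset.univ.erase k := by simp [Ne.symm hkj]
    rw [Finset.card_erase_of_mem hjmem, Finset.card_erase_of_mem (Finset.mem_univ k)]
    simp only [Finset.card_univ, Fintype.card_fin]
    omega
  have heq : pairM q k j (v, w) * (margW q w) ^ (N - 1)
      = margI q k (v 0, w) * margI q j (v 1, w) * (margW q w) ^ (N - 2) := by
    rw [← hsum, ← hsum2]
    refine Finset.sum_congr rfl (fun x _ => ?_)
    split
    · exact hci x w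
    · rfl
  have hI0 : margI (pairM q k j) 0 (v 0, w) = margI q k (v 0, w) := margI_pairM_zero q k j (v 0) w
  have hI1 : margI (pairM q k j) 1 (v 1, w) = margI q j (v 1, w) := margI_pairM_one q k j (v 1) w
  rw [hI0, hI1, margW_pairM]
  rcases eq_or_lt_of_le (margW_nonneg q hq w) with h0 | hpos
  · -- margW q w = 0 : everything vanishes
    have hq0 : pairM q k j (v, w) = 0 := by
      have hle : pairM q k j (v, w) ≤ margW q w := by
        rw [← margW_pairM q k j w]
        exact le_margW _ (pairM_nonneg q hq k j) v w
      have hnn := pairM_nonneg q hq k j (v, w)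
      linarith
    have hk0 : margI q k (v 0, w) = 0 := by
      have hle : margI q k (v 0, w) ≤ margW q w := by
        rw [← sum_margI q k w]
        exact Finset.single_le_sum (f := fun b => margI q k (b, w))
          (fun b _ => margI_nonneg q hq k (b, w)) (Finset.mem_univ (v 0))
      have hnn := margI_nonneg q hq k (v 0, w)
      linarith
    rw [hq0, hk0]
    ring
  · have hne : (margW q w) ^ (N - 2) ≠ 0 := pow_ne_zero _ (ne_of_gt hpos)
    have hpow : (margW q w) ^ (N - 1) = (margW q w) ^ (N - 2) * margW q w := by
      rw [← pow_succ]
      congr 1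
      omega
    apply mul_right_cancel₀ hne
    calc pairM q k j (v, w) * margW q w * (margW q w) ^ (N - 2)
        = pairM q k j (v, w) * (margW q w) ^ (N - 1) := by rw [hpow]; ring
      _ = margI q k (v 0, w) * margI q j (v 1, w) * (margW q w) ^ (N - 2) := heq

end PairMarg

section PFull
variable {N : ℕ} {θ a₁ : ℝ}

lemma sum_bsc (a : ℝ) (s : Bool) : ∑ b, bsc a s b = 1 := by
  cases s <;> simp [bsc] <;> ring

lemma bsc_nonneg (ha0 : 0 ≤ a₁) (ha1 : a₁ ≤ 1/2) (s b : Bool) : 0 ≤ bsc a₁ s b := by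
  unfold bsc; split <;> linarith

lemma pS_nonneg (hθ0 : 0 ≤ θ) (hθ1 : θ ≤ 1) (s : Bool) : 0 ≤ pS θ s := by
  unfold pS; split <;> linarith

lemma sum_pS : ∑ s, pS θ s = 1 := by
  simp [pS]

lemma pFull_nonneg (hθ0 : 0 ≤ θ) (hθ1 : θ ≤ 1) (ha0 : 0 ≤ a₁) (ha1 : a₁ ≤ 1/2)
    (z : (Fin N → Bool) × Bool) : 0 ≤ pFull N θ a₁ z :=
  mul_nonneg (pS_nonneg hθ0 hθ1 _) (Finset.prod_nonneg (fun i _ => bsc_nonneg ha0 ha1 _ _))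

lemma margW_pFull (s : Bool) : margW (pFull N θ a₁) s = pS θ s := by
  unfold margW pFull
  dsimp only
  rw [← Finset.mul_sum, sum_pi_prod (fun i b => bsc a₁ s b)]
  rw [Finset.prod_congr rfl (fun i _ => sum_bsc a₁ s)]
  simp

lemma margI_pFull (i : Fin N) (b : Bool) (s : Bool) :
    margI (pFull N θ a₁) i (b, s) = pS θ s * bsc a₁ s b := by
  unfold margI pFull
  dsimp only
  have : ∀ x : Fin N → Bool,
      (if x i = b then pS θ s * ∏ i', bsc a₁ s (x i') else 0)
        = pS θ s * (if x i = b then ∏ i', bsc a₁ s (x i') else 0) := by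
    intro x; rw [mul_ite, mul_zero]
  rw [Finset.sum_congr rfl (fun x _ => this x), ← Finset.mul_sum,
    sum_ite_pi_one (fun _ b' => bsc a₁ s b') i b]
  rw [Finset.prod_congr rfl (fun i' _ => sum_bsc a₁ s), Finset.prod_const, one_pow, mul_one]

lemma sum_pFull : ∑ z, pFull N θ a₁ z = 1 := by
  rw [Fintype.sum_prod_type_right]
  have : ∀ s, ∑ x : Fin N → Bool, pFull N θ a₁ (x, s) = pS θ s := fun s => margW_pFull s
  rw [Finset.sum_congr rfl (fun s _ => this s), sum_pS]

lemma ci_pFull (hN : 1 ≤ N) : ∀ (x : Fin N → Bool) (s : Bool),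
    pFull N θ a₁ (x, s) * (margW (pFull N θ a₁) s) ^ (N - 1)
      = ∏ i, margI (pFull N θ a₁) i (x i, s) := by
  intro x s
  rw [margW_pFull, Finset.prod_congr rfl (fun i _ => margI_pFull i (x i) s),
    Finset.prod_mul_distrib, Finset.prod_const, Finset.card_univ, Fintype.card_fin]
  unfold pFull
  dsimp only
  have hpow : pS θ s ^ N = pS θ s * pS θ s ^ (N - 1) := by
    rw [← pow_succ']
    congr 1
    omega
  rw [hpow]
  ring

lemma pPairS_eq_pairM (k j : Fin N) :
    pPairS N θ a₁ k j = pairM (pFull N θ a₁) k j := rfl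

end PFull

section Gibbs

lemma gibbs_s5 {A : Type*} [Fintype A] (p r : A → ℝ) (hp : ∀ a, 0 ≤ p a)
    (hr : ∀ a, 0 ≤ r a) (hs : ∑ a, r a ≤ ∑ a, p a)
    (hdom : ∀ a, r a = 0 → p a = 0) :
    ∑ a, p a * Real.log (r a) ≤ ∑ a, p a * Real.log (p a) := by
  have key : ∀ a, p a * Real.log (r a) - p a * Real.log (p a) ≤ r a - p a := by
    intro a
    rcases eq_or_lt_of_le (hp a) with h0 | hppos
    · rw [← h0]; simp [hr a]
    · rcases eq_or_lt_of_le (hr a) with hr0 | hrpos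
      · exact absurd (hdom a hr0.symm) (ne_of_gt hppos)
      · have hlog : Real.log (r a) - Real.log (p a) = Real.log (r a / p a) := by
          rw [Real.log_div (ne_of_gt hrpos) (ne_of_gt hppos)]
        have hle : Real.log (r a / p a) ≤ r a / p a - 1 :=
          Real.log_le_sub_one_of_pos (div_pos hrpos hppos)
        calc p a * Real.log (r a) - p a * Real.log (p a)
            = p a * (Real.log (r a / p a)) := by rw [← hlog]; ring
          _ ≤ p a * (r a / p a - 1) := by
              exact mul_le_mul_of_nonneg_left hle (le_of_lt hppos)
          _ = r a - p a := by field_simp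
  have := Finset.sum_le_sum (fun a (_ : a ∈ Finset.univ) => key a)
  rw [Finset.sum_sub_distrib, Finset.sum_sub_distrib] at this
  linarith

lemma mutualInfo_nonneg {A B : Type*} [Fintype A] [Fintype B] (q : A × B → ℝ)
    (h0 : ∀ z, 0 ≤ q z) (h1 : ∑ z, q z = 1) :
    0 ≤ ent (fun a => ∑ b, q (a, b)) + ent (fun b => ∑ a, q (a, b)) - ent q := by
  set m1 : A → ℝ := fun a => ∑ b, q (a, b) with hm1
  set m2 : B → ℝ := fun b => ∑ a, q (a, b) with hm2
  have hm1nn : ∀ a, 0 ≤ m1 a := fun a => Finset.sum_nonneg (fun b _ => h0 _)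
  have hm2nn : ∀ b, 0 ≤ m2 b := fun b => Finset.sum_nonneg (fun a _ => h0 _)
  have hqle1 : ∀ a b, q (a, b) ≤ m1 a := fun a b =>
    Finset.single_le_sum (f := fun b => q (a, b)) (fun b _ => h0 _) (Finset.mem_univ b)
  have hqle2 : ∀ a b, q (a, b) ≤ m2 b := fun a b =>
    Finset.single_le_sum (f := fun a => q (a, b)) (fun a _ => h0 _) (Finset.mem_univ a)
  set r : A × B → ℝ := fun z => m1 z.1 * m2 z.2 with hrdef
  have hrnn : ∀ z, 0 ≤ r z := fun z => mul_nonneg (hm1nn _) (hm2nn _)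
  have hsum_r : ∑ z, r z = 1 := by
    rw [Fintype.sum_prod_type]
    simp only [hrdef]
    rw [← Finset.sum_mul_sum]
    have e1 : ∑ a, m1 a = 1 := by
      rw [hm1]; rw [← Fintype.sum_prod_type]; exact h1
    have e2 : ∑ b, m2 b = 1 := by
      rw [hm2]; rw [← Fintype.sum_prod_type_right]; exact h1
    rw [e1, e2, one_mul]
  have hdom : ∀ z, r z = 0 → q z = 0 := by
    intro z hz
    rcases mul_eq_zero.mp hz with h | h
    · exact le_antisymm (h ▸ hqle1 z.1 z.2) (h0 z)
    · exact le_antisymm (h ▸ hqle2 z.1 z.2) (h0 z)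
  have hgibbs := gibbs_s5 q r h0 hrnn (by rw [hsum_r, h1]) hdom
  have hsplit : ∑ z : A × B, q z * Real.log (r z)
      = ∑ z : A × B, q z * Real.log (m1 z.1) + ∑ z : A × B, q z * Real.log (m2 z.2) := by
    rw [← Finset.sum_add_distrib]
    refine Finset.sum_congr rfl (fun z _ => ?_)
    rcases eq_or_lt_of_le (h0 z) with hq0 | hqpos
    · rw [← hq0]; ring
    · have h1pos : 0 < m1 z.1 := lt_of_lt_of_le hqpos (hqle1 z.1 z.2)
      have h2pos : 0 < m2 z.2 := lt_of_lt_of_le hqpos (hqle2 z.1 z.2)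
      rw [hrdef]
      dsimp only
      rw [Real.log_mul (ne_of_gt h1pos) (ne_of_gt h2pos)]
      ring
  have hmarg1 : ∑ z : A × B, q z * Real.log (m1 z.1) = ∑ a, m1 a * Real.log (m1 a) := by
    rw [Fintype.sum_prod_type]
    refine Finset.sum_congr rfl (fun a _ => ?_)
    rw [hm1]
    dsimp only
    rw [Finset.sum_mul]
  have hmarg2 : ∑ z : A × B, q z * Real.log (m2 z.2) = ∑ b, m2 b * Real.log (m2 b) := by
    rw [Fintype.sum_prod_type_right]
    refine Finset.sum_congr rfl (fun b _ => ?_)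
    rw [hm2]
    dsimp only
    rw [Finset.sum_mul]
  unfold ent
  rw [hsplit, hmarg1, hmarg2] at hgibbs
  linarith

end Gibbs

lemma pair_sum_bound {N : ℕ} (hN : 2 ≤ N) (u : Fin N → ℝ) (c : ℝ)
    (h : ∀ k j : Fin N, k ≠ j → u k + u j ≤ 2 * c) : ∑ i, u i ≤ (N : ℝ) * c := by
  classical
  set S := ∑ i, u i with hS
  have big : ∑ k : Fin N, ∑ j ∈ Finset.univ.erase k, (u k + u j)
      ≤ ∑ k : Fin N, ∑ j ∈ Finset.univ.erase k, 2 * c := by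
    refine Finset.sum_le_sum (fun k _ => Finset.sum_le_sum (fun j hj => ?_))
    exact h k j (Ne.symm (Finset.ne_of_mem_erase hj))
  have cardN : ∀ k : Fin N, ((Finset.univ.erase k).card : ℝ) = (N : ℝ) - 1 := by
    intro k
    rw [Finset.card_erase_of_mem (Finset.mem_univ k), Finset.card_univ, Fintype.card_fin]
    have : (1:ℕ) ≤ N := by omega
    push_cast [Nat.cast_sub this]
    ring
  have lhs_eq : ∑ k : Fin N, ∑ j ∈ Finset.univ.erase k, (u k + u j)
      = (2 * (N : ℝ) - 2) * S := by
    have : ∀ k : Fin N, ∑ j ∈ Finset.univ.erase k, (u k + u j)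
        = ((N : ℝ) - 1) * u k + (S - u k) := by
      intro k
      rw [Finset.sum_add_distrib, Finset.sum_const, nsmul_eq_mul, cardN k,
        Finset.sum_erase_eq_sub (Finset.mem_univ k)]
    rw [Finset.sum_congr rfl (fun k _ => this k), Finset.sum_add_distrib,
      Finset.sum_sub_distrib, ← Finset.mul_sum, Finset.sum_const, Finset.card_univ,
      Fintype.card_fin, nsmul_eq_mul]
    ring
  have rhs_eq : ∑ k : Fin N, ∑ j ∈ Finset.univ.erase k, 2 * c
      = (N : ℝ) * (((N : ℝ) - 1) * (2 * c)) := by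
    rw [Finset.sum_congr rfl (fun k _ => by rw [Finset.sum_const, nsmul_eq_mul, cardN k]),
      Finset.sum_const, Finset.card_univ, Fintype.card_fin, nsmul_eq_mul]
  rw [lhs_eq, rhs_eq] at big
  have hN' : (2:ℝ) ≤ (N:ℝ) := by exact_mod_cast hN
  nlinarith [big, hN']

/-- summing a function over `Fin 2` composed with `![false, true]` is summing over `Bool`. -/
lemma sum_fin2_bool (f : Bool → ℝ) : ∑ w : Fin 2, f (![false, true] w) = ∑ b, f b := by
  rw [Fin.sum_univ_two]
  simp only [Matrix.cons_val_zero, Matrix.cons_val_one, Matrix.head_cons, Fintype.sum_bool]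
  ring

lemma ent_fin2_bool (g : Bool → ℝ) : ent (fun w : Fin 2 => g (![false, true] w)) = ent g := by
  unfold ent
  rw [sum_fin2_bool (fun b => g b * Real.log (g b))]


/-- If `S` achieves the common information of every pair. -/
theorem bsc_mixture_common_information (N : ℕ) (θ a₁ : ℝ)
    (hθ0 : 0 ≤ θ) (hθ1 : θ ≤ 1) (ha0 : 0 ≤ a₁) (ha1 : a₁ ≤ 1 / 2) (hN : 2 ≤ N)
    (hpair : ∀ k j : Fin N, k ≠ j →
      wynerCI (fun v : Fin 2 → Bool => ∑ s, pPairS N θ a₁ k j (v, s))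
        = ent (fun v : Fin 2 → Bool => ∑ s, pPairS N θ a₁ k j (v, s))
          + ent (fun s => ∑ v : Fin 2 → Bool, pPairS N θ a₁ k j (v, s))
          - ent (pPairS N θ a₁ k j)) :
    wynerCI (fun x : Fin N → Bool => ∑ s, pFull N θ a₁ (x, s))
      = ent (fun x : Fin N → Bool => ∑ s, pFull N θ a₁ (x, s))
        + ent (fun s => ∑ x : Fin N → Bool, pFull N θ a₁ (x, s))
        - ent (pFull N θ a₁) := by
  classical
  have hN1 : 1 ≤ N := by omega
  have hp0 : ∀ z, 0 ≤ pFull N θ a₁ z := pFull_nonneg hθ0 hθ1 ha0 ha1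
  have hciP := ci_pFull (θ := θ) (a₁ := a₁) hN1
  -- the common single-coordinate marginal (X_i, S)
  set pOne : Bool × Bool → ℝ := fun z => pS θ z.2 * bsc a₁ z.2 z.1 with hpOne
  have hmargIp : ∀ i : Fin N, margI (pFull N θ a₁) i = pOne := by
    intro i
    funext z
    cases z with
    | mk b s => exact margI_pFull i b s
  -- entropy decomposition for pFull
  have entp : ent (pFull N θ a₁)
      = (N : ℝ) * ent pOne - ((N : ℝ) - 1) * ent (margW (pFull N θ a₁)) := by
    have h := ent_decomp (N - 1) (pFull N θ a₁) hp0 hciP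
    rw [Finset.sum_congr rfl (fun i _ => congrArg ent (hmargIp i)), Finset.sum_const,
      Finset.card_univ, Fintype.card_fin, nsmul_eq_mul] at h
    rw [h]
    congr 1
    congr 1
    push_cast [Nat.cast_sub hN1]
    ring
  -- the target value
  set tv : ℝ := ent (fun x : Fin N → Bool => ∑ s, pFull N θ a₁ (x, s))
      + ent (fun s => ∑ x : Fin N → Bool, pFull N θ a₁ (x, s)) - ent (pFull N θ a₁) with htv
  have hentW : ent (fun s => ∑ x : Fin N → Bool, pFull N θ a₁ (x, s))
      = ent (margW (pFull N θ a₁)) := rfl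
  -- ===== membership =====
  have hmem : ∃ n : ℕ, ∃ q : (Fin N → Bool) × Fin n → ℝ, IsPMF q ∧
      (∀ x, (∑ w, q (x, w)) = (fun x : Fin N → Bool => ∑ s, pFull N θ a₁ (x, s)) x) ∧
      (∀ x w, q (x, w) * (∑ y, q (y, w)) ^ (Fintype.card (Fin N) - 1)
          = ∏ i, (∑ y : Fin N → Bool, if y i = x i then q (y, w) else 0)) ∧
      tv = ent (fun x : Fin N → Bool => ∑ w, q (x, w))
          + ent (fun w => ∑ x : Fin N → Bool, q (x, w)) - ent q := by
    refine ⟨2, fun z => pFull N θ a₁ (z.1, ![false, true] z.2), ⟨fun z => hp0 _, ?_⟩, ?_, ?_, ?_⟩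
    · rw [Fintype.sum_prod_type_right]
      rw [sum_fin2_bool (fun s => ∑ x, pFull N θ a₁ (x, s)), ← Fintype.sum_prod_type_right]
      exact sum_pFull
    · intro x
      exact sum_fin2_bool (fun s => pFull N θ a₁ (x, s))
    · intro x w
      simp only [Fintype.card_fin]
      exact hciP x (![false, true] w)
    · have e1 : (fun x : Fin N → Bool => ∑ w : Fin 2, pFull N θ a₁ (x, ![false, true] w))
          = (fun x : Fin N → Bool => ∑ s, pFull N θ a₁ (x, s)) :=
        funext (fun x => sum_fin2_bool (fun s => pFull N θ a₁ (x, s)))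
      have e2 : ent (fun w : Fin 2 => ∑ x : Fin N → Bool, pFull N θ a₁ (x, ![false, true] w))
          = ent (fun s => ∑ x : Fin N → Bool, pFull N θ a₁ (x, s)) :=
        ent_fin2_bool (fun s => ∑ x : Fin N → Bool, pFull N θ a₁ (x, s))
      have e3 : ent (fun z : (Fin N → Bool) × Fin 2 => pFull N θ a₁ (z.1, ![false, true] z.2))
          = ent (pFull N θ a₁) := by
        unfold ent
        congr 1
        rw [Fintype.sum_prod_type_right, Fintype.sum_prod_type_right]
        exact sum_fin2_bool
          (fun s => ∑ x, pFull N θ a₁ (x, s) * Real.log (pFull N θ a₁ (x, s)))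
      rw [htv, ← e1, ← e2, ← e3]
  -- ===== lower bound =====
  have hlb : ∀ r : ℝ, (∃ n : ℕ, ∃ q : (Fin N → Bool) × Fin n → ℝ, IsPMF q ∧
      (∀ x, (∑ w, q (x, w)) = (fun x : Fin N → Bool => ∑ s, pFull N θ a₁ (x, s)) x) ∧
      (∀ x w, q (x, w) * (∑ y, q (y, w)) ^ (Fintype.card (Fin N) - 1)
          = ∏ i, (∑ y : Fin N → Bool, if y i = x i then q (y, w) else 0)) ∧
      r = ent (fun x : Fin N → Bool => ∑ w, q (x, w))
          + ent (fun w => ∑ x : Fin N → Bool, q (x, w)) - ent q) → tv ≤ r := by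
    rintro r ⟨n, q, ⟨hq0, hq1⟩, hmarg, hci, rfl⟩
    have hci' : ∀ x w, q (x, w) * (margW q w) ^ (N - 1) = ∏ i, margI q i (x i, w) := by
      intro x w
      have h := hci x w
      rw [Fintype.card_fin] at h
      exact h
    have entq : ent q = (∑ i, ent (margI q i)) - ((N : ℝ) - 1) * ent (margW q) := by
      have h := ent_decomp (N - 1) q hq0 hci'
      rw [h]
      congr 1
      congr 1
      push_cast [Nat.cast_sub hN1]
      ring
    -- the pairwise inequality
    have hpairs : ∀ k j : Fin N, k ≠ j →
        (ent (margI q k) - ent (margW q)) + (ent (margI q j) - ent (margW q))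
          ≤ 2 * (ent pOne - ent (margW (pFull N θ a₁))) := by
      intro k j hkj
      -- pair marginal of q
      have hq20 : ∀ z, 0 ≤ pairM q k j z := pairM_nonneg q hq0 k j
      have hciq2 := pair_ci q hq0 hN k j hkj hci'
      have hciq2' : ∀ v w, pairM q k j (v, w) * (margW (pairM q k j) w) ^ 1
          = ∏ i : Fin 2, margI (pairM q k j) i (v i, w) := by
        intro v w
        rw [pow_one]
        exact hciq2 v w
      have hmargI20 : margI (pairM q k j) 0 = margI q k := by
        funext z
        cases z with
        | mk b w => exact margI_pairM_zero q k j b w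
      have hmargI21 : margI (pairM q k j) 1 = margI q j := by
        funext z
        cases z with
        | mk b w => exact margI_pairM_one q k j b w
      have hmW2 : margW (pairM q k j) = margW q := funext (margW_pairM q k j)
      have entq2 : ent (pairM q k j)
          = ent (margI q k) + ent (margI q j) - ent (margW q) := by
        have h := ent_decomp 1 (pairM q k j) hq20 hciq2'
        rw [Fin.sum_univ_two, hmargI20, hmargI21, hmW2] at h
        rw [h]
        push_cast
        ring
      -- pair marginal of pFull is pPairS
      have hciP2 := pair_ci (pFull N θ a₁) hp0 hN k j hkj hciP
      have hciP2' : ∀ v s, pairM (pFull N θ a₁) k j (v, s)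
            * (margW (pairM (pFull N θ a₁) k j) s) ^ 1
          = ∏ i : Fin 2, margI (pairM (pFull N θ a₁) k j) i (v i, s) := by
        intro v s
        rw [pow_one]
        exact hciP2 v s
      have hmargIP20 : margI (pairM (pFull N θ a₁) k j) 0 = margI (pFull N θ a₁) k := by
        funext z
        cases z with
        | mk b s => exact margI_pairM_zero (pFull N θ a₁) k j b s
      have hmargIP21 : margI (pairM (pFull N θ a₁) k j) 1 = margI (pFull N θ a₁) j := by
        funext z
        cases z with
        | mk b s => exact margI_pairM_one (pFull N θ a₁) k j b s
      have hmWP2 : margW (pairM (pFull N θ a₁) k j) = margW (pFull N θ a₁) :=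
        funext (margW_pairM (pFull N θ a₁) k j)
      have entP2 : ent (pPairS N θ a₁ k j)
          = 2 * ent pOne - ent (margW (pFull N θ a₁)) := by
        have h := ent_decomp 1 (pairM (pFull N θ a₁) k j)
          (pairM_nonneg (pFull N θ a₁) hp0 k j) hciP2'
        rw [Fin.sum_univ_two, hmargIP20, hmargIP21, hmWP2, hmargIp k, hmargIp j] at h
        rw [pPairS_eq_pairM, h]
        push_cast
        ring
      -- marginal agreement
      have hq2marg : ∀ v : Fin 2 → Bool,
          (∑ w, pairM q k j (v, w)) = ∑ s, pPairS N θ a₁ k j (v, s) := by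
        intro v
        have swapq : (∑ w, pairM q k j (v, w))
            = ∑ x : Fin N → Bool, (if x k = v 0 ∧ x j = v 1 then (∑ w, q (x, w)) else 0) := by
          unfold pairM
          dsimp only
          rw [Finset.sum_comm]
          refine Finset.sum_congr rfl (fun x _ => ?_)
          by_cases hc : x k = v 0 ∧ x j = v 1
          · simp only [if_pos hc]
          · simp only [if_neg hc, Finset.sum_const_zero]
        have swapp : (∑ s, pPairS N θ a₁ k j (v, s))
            = ∑ x : Fin N → Bool,
              (if x k = v 0 ∧ x j = v 1 then (∑ s, pFull N θ a₁ (x, s)) else 0) := by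
          unfold pPairS
          dsimp only
          rw [Finset.sum_comm]
          refine Finset.sum_congr rfl (fun x _ => ?_)
          by_cases hc : x k = v 0 ∧ x j = v 1
          · simp only [if_pos hc]
          · simp only [if_neg hc, Finset.sum_const_zero]
        rw [swapq, swapp]
        refine Finset.sum_congr rfl (fun x _ => ?_)
        by_cases hc : x k = v 0 ∧ x j = v 1
        · simp only [if_pos hc]
          exact hmarg x
        · simp only [if_neg hc]
      -- membership of the pair marginal of q in the pair wyner set
      have hmem2 : ∃ n' : ℕ, ∃ q' : (Fin 2 → Bool) × Fin n' → ℝ, IsPMF q' ∧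
          (∀ v, (∑ w, q' (v, w)) = (fun v : Fin 2 → Bool => ∑ s, pPairS N θ a₁ k j (v, s)) v) ∧
          (∀ v w, q' (v, w) * (∑ u, q' (u, w)) ^ (Fintype.card (Fin 2) - 1)
              = ∏ i, (∑ u : Fin 2 → Bool, if u i = v i then q' (u, w) else 0)) ∧
          (ent (fun v : Fin 2 → Bool => ∑ s, pPairS N θ a₁ k j (v, s))
            + ent (margW q) - ent (pairM q k j))
            = ent (fun v : Fin 2 → Bool => ∑ w, q' (v, w))
              + ent (fun w => ∑ v : Fin 2 → Bool, q' (v, w)) - ent q' := by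
        refine ⟨n, pairM q k j, ⟨hq20, ?_⟩, hq2marg, ?_, ?_⟩
        · rw [Fintype.sum_prod_type_right]
          have : ∀ w, (∑ v : Fin 2 → Bool, pairM q k j (v, w)) = margW q w :=
            fun w => margW_pairM q k j w
          rw [Finset.sum_congr rfl (fun w _ => this w)]
          unfold margW
          rw [← Fintype.sum_prod_type_right]
          exact hq1
        · intro v w
          rw [show Fintype.card (Fin 2) - 1 = 1 from rfl, pow_one]
          exact hciq2 v w
        · have eA : (fun v : Fin 2 → Bool => ∑ w, pairM q k j (v, w))
              = (fun v : Fin 2 → Bool => ∑ s, pPairS N θ a₁ k j (v, s)) :=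
            funext hq2marg
          have eB : (fun w : Fin n => ∑ v : Fin 2 → Bool, pairM q k j (v, w)) = margW q := by
            funext w
            exact margW_pairM q k j w
          rw [eA, eB]
      -- lower-boundedness of the pair wyner set
      have hbdd2 : ∀ r' : ℝ, (∃ n' : ℕ, ∃ q' : (Fin 2 → Bool) × Fin n' → ℝ, IsPMF q' ∧
          (∀ v, (∑ w, q' (v, w)) = (fun v : Fin 2 → Bool => ∑ s, pPairS N θ a₁ k j (v, s)) v) ∧
          (∀ v w, q' (v, w) * (∑ u, q' (u, w)) ^ (Fintype.card (Fin 2) - 1)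
              = ∏ i, (∑ u : Fin 2 → Bool, if u i = v i then q' (u, w) else 0)) ∧
          r' = ent (fun v : Fin 2 → Bool => ∑ w, q' (v, w))
              + ent (fun w => ∑ v : Fin 2 → Bool, q' (v, w)) - ent q') → 0 ≤ r' := by
        rintro r' ⟨n', q', ⟨h0', h1'⟩, _, _, rfl⟩
        exact mutualInfo_nonneg q' h0' h1'
      have hle : wynerCI (fun v : Fin 2 → Bool => ∑ s, pPairS N θ a₁ k j (v, s))
          ≤ ent (fun v : Fin 2 → Bool => ∑ s, pPairS N θ a₁ k j (v, s))
            + ent (margW q) - ent (pairM q k j) := by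
        refine csInf_le ⟨0, ?_⟩ hmem2
        rintro r' hr'
        exact hbdd2 r' hr'
      rw [hpair k j hkj] at hle
      have hentWp2 : ent (fun s => ∑ v : Fin 2 → Bool, pPairS N θ a₁ k j (v, s))
          = ent (margW (pFull N θ a₁)) := by
        have : (fun s => ∑ v : Fin 2 → Bool, pPairS N θ a₁ k j (v, s))
            = margW (pFull N θ a₁) := by
          funext s
          exact margW_pairM (pFull N θ a₁) k j s
        rw [this]
      rw [hentWp2, entP2, entq2] at hle
      linarith
    -- sum the pairwise inequalities
    have hsum := pair_sum_bound hN (fun i => ent (margI q i) - ent (margW q))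
      (ent pOne - ent (margW (pFull N θ a₁))) hpairs
    rw [Finset.sum_sub_distrib, Finset.sum_const, Finset.card_univ, Fintype.card_fin,
      nsmul_eq_mul] at hsum
    -- finish
    have hmargX : ent (fun x : Fin N → Bool => ∑ w, q (x, w))
        = ent (fun x : Fin N → Bool => ∑ s, pFull N θ a₁ (x, s)) :=
      congrArg ent (funext hmarg)
    have hentWq : ent (fun w => ∑ x : Fin N → Bool, q (x, w)) = ent (margW q) := rfl
    rw [htv, hmargX, hentWq, hentW, entq, entp]
    linarith
  -- ===== conclusion =====
  have : wynerCI (fun x : Fin N → Bool => ∑ s, pFull N θ a₁ (x, s)) = tv := by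
    unfold wynerCI
    refine le_antisymm (csInf_le ⟨tv, ?_⟩ hmem) (le_csInf ⟨tv, hmem⟩ ?_)
    · rintro r hr
      exact hlb r hr
    · rintro r hr
      exact hlb r hr
  rw [this, htv]
end

section
/- Achievability part of the Gaussian common information: if X₁ = √ρ·W + √(1−ρ)·N₁ and X₂ = √ρ·W + √(1−ρ)·N₂ with W, N₁, N₂ mutually independent standard Gaussians and ρ ∈ [0,1), then X₁ and X₂ are conditionally independent given W, they are jointly Gaussian with correlation ρ, and I(X₁,X₂;W) = (1/2)·log((1+ρ)/(1−ρ)). -/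
open MeasureTheory ProbabilityTheory Real
open scoped ENNReal NNReal

/-- Differential entropy of a density `f` with respect to the canonical
(Lebesgue) measure (natural log). -/
noncomputable def dent {α : Type*} [MeasureSpace α] (f : α → ℝ) : ℝ :=
  -∫ x, f x * Real.log (f x)

/-- The `N(0,v)` density. -/
noncomputable def gauss1 (v x : ℝ) : ℝ :=
  (Real.sqrt (2 * Real.pi * v))⁻¹ * Real.exp (-(x ^ 2) / (2 * v))

/-- The standard bivariate Gaussian density with zero means, unit variances and
correlation `ρ`. -/
noncomputable def gauss2 (ρ x y : ℝ) : ℝ :=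
  (2 * Real.pi * Real.sqrt (1 - ρ ^ 2))⁻¹ *
    Real.exp (-(x ^ 2 - 2 * ρ * x * y + y ^ 2) / (2 * (1 - ρ ^ 2)))

/-- The joint density of `(X₁, X₂, W)` where `Xᵢ = √ρ·W + √(1−ρ)·Nᵢ`. -/
noncomputable def fXXW (ρ : ℝ) (z : ℝ × ℝ × ℝ) : ℝ :=
  gauss1 1 z.2.2 * gauss1 (1 - ρ) (z.1 - Real.sqrt ρ * z.2.2)
    * gauss1 (1 - ρ) (z.2.1 - Real.sqrt ρ * z.2.2)

lemma gauss1_nonneg (v x : ℝ) : 0 ≤ gauss1 v x := by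
  unfold gauss1; positivity

lemma gauss1_pos {v : ℝ} (hv : 0 < v) (x : ℝ) : 0 < gauss1 v x := by
  unfold gauss1
  have : 0 < Real.sqrt (2 * π * v) := Real.sqrt_pos.2 (by positivity)
  positivity

lemma gauss1_eq_pdf {v : ℝ} (hv : 0 ≤ v) : gauss1 v = gaussianPDFReal 0 ⟨v, hv⟩ := by
  funext x
  simp [gauss1, gaussianPDFReal]
  rfl

lemma integral_gauss1 {v : ℝ} (hv : 0 < v) : ∫ x, gauss1 v x = 1 := by
  rw [gauss1_eq_pdf hv.le]
  exact integral_gaussianPDFReal_eq_one 0 (fun h => hv.ne' (congrArg NNReal.toReal h))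

lemma integrable_gauss1 {v : ℝ} (hv : 0 < v) : Integrable (gauss1 v) := by
  rw [gauss1_eq_pdf hv.le]
  exact integrable_gaussianPDFReal 0 _

lemma integral_gauss1_shift {v : ℝ} (hv : 0 < v) (c : ℝ) : ∫ x, gauss1 v (x - c) = 1 := by
  rw [integral_sub_right_eq_self (gauss1 v) c]
  exact integral_gauss1 hv

lemma integrable_sq_gauss1 {v : ℝ} (hv : 0 < v) : Integrable fun x => x ^ 2 * gauss1 v x := by
  have h := (integrable_rpow_mul_exp_neg_mul_sq (b := (2*v)⁻¹) (by positivity)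
      (s := 2) (by norm_num)).const_mul (Real.sqrt (2 * π * v))⁻¹
  refine h.congr (Filter.Eventually.of_forall fun x => ?_)
  simp only [gauss1, Real.rpow_two]
  rw [show -(x^2)/(2*v) = -(2*v)⁻¹ * x^2 by ring]
  ring

lemma integrable_sq_exp {b : ℝ} (hb : 0 < b) :
    Integrable fun x : ℝ => x ^ 2 * Real.exp (-b * x ^ 2) := by
  have h := integrable_rpow_mul_exp_neg_mul_sq hb (s := 2) (by norm_num)
  exact h.congr (Filter.Eventually.of_forall fun x => by norm_num [Real.rpow_natCast])

lemma integral_sq_exp {b : ℝ} (hb : 0 < b) :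
    ∫ x : ℝ, x ^ 2 * Real.exp (-b * x ^ 2) = Real.sqrt (π / b) / (2 * b) := by
  have hderiv : ∀ x : ℝ, HasDerivAt (fun y : ℝ => y * Real.exp (-b * y ^ 2))
      (Real.exp (-b * x ^ 2) - 2 * b * (x ^ 2 * Real.exp (-b * x ^ 2))) x := by
    intro x
    have h1 : HasDerivAt (fun y : ℝ => -b * y ^ 2) (-b * (2 * x)) x := by
      simpa using ((hasDerivAt_pow 2 x).const_mul (-b))
    have h2 : HasDerivAt (fun y : ℝ => y * Real.exp (-b * y ^ 2))
        (1 * Real.exp (-b * x ^ 2) + id x * (Real.exp (-b * x ^ 2) * (-b * (2 * x)))) x :=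
      (hasDerivAt_id x).mul h1.exp
    convert h2 using 1
    simp only [id]
    ring
  have hint2 := integrable_sq_exp hb
  have hint1 : Integrable fun x : ℝ => Real.exp (-b * x ^ 2) := integrable_exp_neg_mul_sq hb
  have hintd : Integrable fun x : ℝ =>
      Real.exp (-b * x ^ 2) - 2 * b * (x ^ 2 * Real.exp (-b * x ^ 2)) :=
    hint1.sub (hint2.const_mul _)
  have hintf : Integrable fun x : ℝ => x * Real.exp (-b * x ^ 2) := integrable_mul_exp_neg_mul_sq hb
  have h0 := integral_eq_zero_of_hasDerivAt_of_integrable hderiv hintd hintf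
  rw [integral_sub hint1 (hint2.const_mul _), integral_const_mul, integral_gaussian] at h0
  have hb' : (2 : ℝ) * b ≠ 0 := by positivity
  field_simp at h0 ⊢
  linarith

lemma integral_sq_gauss1 {v : ℝ} (hv : 0 < v) : ∫ x, x ^ 2 * gauss1 v x = v := by
  have hb : (0:ℝ) < (2*v)⁻¹ := by positivity
  have h2πv : (0:ℝ) < 2 * π * v := by positivity
  have : ∀ x : ℝ, x ^ 2 * gauss1 v x
      = (Real.sqrt (2 * π * v))⁻¹ * (x ^ 2 * Real.exp (-(2*v)⁻¹ * x ^ 2)) := by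
    intro x
    simp only [gauss1]
    rw [show -(x^2)/(2*v) = -(2*v)⁻¹ * x^2 by ring]
    ring
  simp_rw [this]
  rw [integral_const_mul, integral_sq_exp hb]
  have : π / (2*v)⁻¹ = 2 * π * v := by field_simp
  rw [this]
  rw [show Real.sqrt (2*π*v) / (2 * (2*v)⁻¹) = Real.sqrt (2*π*v) * v by field_simp]
  rw [← mul_assoc, inv_mul_cancel₀ (Real.sqrt_pos.2 h2πv).ne', one_mul]

lemma log_gauss1 {v : ℝ} (hv : 0 < v) (x : ℝ) :
    Real.log (gauss1 v x) = -(Real.log (2 * π * v) / 2) - x ^ 2 / (2 * v) := by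
  have h2πv : (0:ℝ) < 2 * π * v := by positivity
  rw [gauss1, Real.log_mul (by positivity) (Real.exp_ne_zero _), Real.log_inv,
    Real.log_exp, Real.log_sqrt h2πv.le]
  ring

lemma integrable_gauss1_mul_log {v : ℝ} (hv : 0 < v) :
    Integrable fun x => gauss1 v x * Real.log (gauss1 v x) := by
  have : ∀ x : ℝ, gauss1 v x * Real.log (gauss1 v x)
      = (-(Real.log (2 * π * v) / 2)) * gauss1 v x + (-(2*v)⁻¹) * (x ^ 2 * gauss1 v x) := by
    intro x
    rw [log_gauss1 hv]
    field_simp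
    ring
  simp_rw [this]
  exact (((integrable_gauss1 hv).const_mul _).add ((integrable_sq_gauss1 hv).const_mul _))

lemma integral_gauss1_mul_log {v : ℝ} (hv : 0 < v) :
    ∫ x, gauss1 v x * Real.log (gauss1 v x) = -(Real.log (2 * π * v) / 2 + 1/2) := by
  have : ∀ x : ℝ, gauss1 v x * Real.log (gauss1 v x)
      = (-(Real.log (2 * π * v) / 2)) * gauss1 v x + (-(2*v)⁻¹) * (x ^ 2 * gauss1 v x) := by
    intro x
    rw [log_gauss1 hv]
    field_simp
    ring
  simp_rw [this]
  rw [integral_add ((integrable_gauss1 hv).const_mul _) ((integrable_sq_gauss1 hv).const_mul _),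
    integral_const_mul, integral_const_mul, integral_gauss1 hv, integral_sq_gauss1 hv]
  field_simp
  ring

noncomputable def shear3 (a : ℝ) : ℝ × ℝ × ℝ ≃ₜ ℝ × ℝ × ℝ where
  toFun p := (a * p.1 + p.2.1, a * p.1 + p.2.2, p.1)
  invFun z := (z.2.2, z.1 - a * z.2.2, z.2.1 - a * z.2.2)
  left_inv p := by simp
  right_inv z := by simp
  continuous_toFun := by fun_prop
  continuous_invFun := by fun_prop

noncomputable def shear2 (r : ℝ) : ℝ × ℝ ≃ₜ ℝ × ℝ where
  toFun p := (p.1, p.2 + r * p.1)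
  invFun z := (z.1, z.2 - r * z.1)
  left_inv p := by simp
  right_inv z := by simp
  continuous_toFun := by fun_prop
  continuous_invFun := by fun_prop

lemma mp_shear2 (r : ℝ) : MeasurePreserving (shear2 r) volume volume := by
  show MeasurePreserving (fun p : ℝ × ℝ => (p.1, p.2 + r * p.1)) volume volume
  simp only [Measure.volume_eq_prod]
  refine MeasurePreserving.skew_product (g := fun x y => y + r * x) (MeasurePreserving.id _) ?_
    (Filter.Eventually.of_forall fun x => map_add_right_eq_self volume (r * x))
  exact measurable_snd.add (measurable_fst.const_mul r)

lemma mp_shear3 (a : ℝ) : MeasurePreserving (shear3 a) volume volume := by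
  have h1 : MeasurePreserving
      (fun p : ℝ × ℝ × ℝ => (p.1, (a * p.1 + p.2.1, a * p.1 + p.2.2))) volume volume := by
    simp only [Measure.volume_eq_prod]
    refine MeasurePreserving.skew_product (g := fun w (y : ℝ × ℝ) => (a * w + y.1, a * w + y.2))
      (MeasurePreserving.id _) ?_ (Filter.Eventually.of_forall fun w => ?_)
    · exact ((measurable_fst.const_mul a).add (measurable_snd.fst)).prodMk
        ((measurable_fst.const_mul a).add (measurable_snd.snd))
    · show Measure.map ((a * w, a * w) + ·) ((volume : Measure ℝ).prod volume) = _
      exact map_add_left_eq_self _ _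
  have h2 : MeasurePreserving (Prod.swap : ℝ × (ℝ × ℝ) → (ℝ × ℝ) × ℝ) volume volume := by
    simp only [Measure.volume_eq_prod]
    exact Measure.measurePreserving_swap
  have h3 : MeasurePreserving
      (MeasurableEquiv.prodAssoc : ((ℝ × ℝ) × ℝ) ≃ᵐ (ℝ × ℝ × ℝ)) volume volume := by
    simp only [Measure.volume_eq_prod]
    exact measurePreserving_prodAssoc _ _ _
  exact (h3.comp h2).comp h1

lemma map_withDensity_mp {α β : Type*} [MeasurableSpace α] [MeasurableSpace β]
    {μ : Measure α} {ν : Measure β} {e : α → β} (hm : MeasurePreserving e μ ν)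
    (he : MeasurableEmbedding e) {f : β → ℝ≥0∞} (hf : Measurable f) :
    Measure.map e (μ.withDensity (fun x => f (e x))) = ν.withDensity f := by
  ext s hs
  rw [Measure.map_apply hm.measurable hs, withDensity_apply _ (hm.measurable hs),
    withDensity_apply _ hs, ← (hm.restrict_preimage hs).map_eq, lintegral_map hf hm.measurable]

lemma withDensity_prod_ofReal {α β : Type*} [MeasurableSpace α] [MeasurableSpace β]
    (μ : Measure α) (ν : Measure β) [SigmaFinite μ] [SigmaFinite ν]
    {f : α → ℝ} {g : β → ℝ} (hf : Measurable f) (hg : Measurable g) :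
    (μ.withDensity fun a => ENNReal.ofReal (f a)).prod
        (ν.withDensity fun b => ENNReal.ofReal (g b))
      = (μ.prod ν).withDensity fun p => ENNReal.ofReal (f p.1) * ENNReal.ofReal (g p.2) := by
  refine Measure.prod_eq fun s t hs ht => ?_
  rw [withDensity_apply _ (hs.prod ht), ← Measure.prod_restrict,
    lintegral_prod_mul (hf.ennreal_ofReal.aemeasurable) (hg.ennreal_ofReal.aemeasurable),
    ← withDensity_apply _ hs, ← withDensity_apply _ ht]

lemma integral_exp_quadratic {α : ℝ} (hα : 0 < α) (β γ : ℝ) :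
    ∫ w : ℝ, Real.exp (-(α * w ^ 2 + β * w + γ))
      = Real.sqrt (π / α) * Real.exp (β ^ 2 / (4 * α) - γ) := by
  have hα' : α ≠ 0 := hα.ne'
  have key : ∀ w : ℝ, Real.exp (-(α * w ^ 2 + β * w + γ))
      = Real.exp (β ^ 2 / (4 * α) - γ) * Real.exp (-α * (w + β / (2 * α)) ^ 2) := by
    intro w
    rw [← Real.exp_add]
    congr 1
    field_simp
    ring
  simp_rw [key]
  rw [integral_const_mul, integral_add_right_eq_self (fun w => Real.exp (-α * w ^ 2)) (β / (2 * α)),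
    integral_gaussian]
  ring

lemma marg_w {ρ : ℝ} (hρ0 : 0 ≤ ρ) (hρ1 : ρ < 1) (x y : ℝ) :
    ∫ w, fXXW ρ (x, y, w) = gauss2 ρ x y := by
  set a := Real.sqrt ρ with ha_def
  have ha : a ^ 2 = ρ := Real.sq_sqrt hρ0
  set v := 1 - ρ with hv_def
  have hv : 0 < v := by simp [hv_def]; linarith
  have h1ρ : (0:ℝ) < 1 + ρ := by linarith
  have hα : (0:ℝ) < (1 + ρ) / (2 * v) := by positivity
  have hexp : ∀ w : ℝ, -(w ^ 2) / (2 * 1) + -((x - a * w) ^ 2) / (2 * v)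
      + -((y - a * w) ^ 2) / (2 * v)
      = -((1 + ρ) / (2 * v) * w ^ 2 + (-(a * (x + y)) / v) * w + (x ^ 2 + y ^ 2) / (2 * v)) := by
    intro w
    have hvne : v ≠ 0 := hv.ne'
    have e1 : (x - a * w) ^ 2 = x ^ 2 - 2 * a * x * w + ρ * w ^ 2 := by rw [← ha]; ring
    have e2 : (y - a * w) ^ 2 = y ^ 2 - 2 * a * y * w + ρ * w ^ 2 := by rw [← ha]; ring
    rw [e1, e2]
    field_simp
    ring
  have key : ∀ w : ℝ, fXXW ρ (x, y, w)
      = ((Real.sqrt (2 * π * 1))⁻¹ * ((Real.sqrt (2 * π * v))⁻¹ * (Real.sqrt (2 * π * v))⁻¹))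
        * Real.exp (-((1 + ρ) / (2 * v) * w ^ 2 + (-(a * (x + y)) / v) * w
            + (x ^ 2 + y ^ 2) / (2 * v))) := by
    intro w
    rw [← hexp w]
    simp only [fXXW, gauss1]
    rw [Real.exp_add, Real.exp_add]
    ring
  simp_rw [key]
  rw [integral_const_mul, integral_exp_quadratic hα]
  -- now pure algebra
  have hconst : (Real.sqrt (2 * π * 1))⁻¹ * ((Real.sqrt (2 * π * v))⁻¹ * (Real.sqrt (2 * π * v))⁻¹)
      * Real.sqrt (π / ((1 + ρ) / (2 * v))) = (2 * π * Real.sqrt (1 - ρ ^ 2))⁻¹ := by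
    rw [mul_one, show π / ((1 + ρ) / (2 * v)) = 2 * π * v / (1 + ρ) by field_simp,
      Real.sqrt_div (by positivity) (1 + ρ),
      show (1:ℝ) - ρ ^ 2 = v * (1 + ρ) by rw [hv_def]; ring,
      Real.sqrt_mul hv.le (1 + ρ), Real.sqrt_mul (by positivity : (0:ℝ) ≤ 2 * π) v]
    have hs : Real.sqrt (2 * π) * Real.sqrt (2 * π) = 2 * π :=
      Real.mul_self_sqrt (by positivity)
    have h1 : Real.sqrt (2 * π) ≠ 0 := by positivity
    have h2 : Real.sqrt v ≠ 0 := by positivity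
    have h3 : Real.sqrt (1 + ρ) ≠ 0 := by positivity
    rw [← hs]
    field_simp
    rw [Real.sqrt_sq (Real.sqrt_nonneg _)]
  have hexp2 : (-(a * (x + y)) / v) ^ 2 / (4 * ((1 + ρ) / (2 * v))) - (x ^ 2 + y ^ 2) / (2 * v)
      = -(x ^ 2 - 2 * ρ * x * y + y ^ 2) / (2 * (1 - ρ ^ 2)) := by
    rw [div_pow, show (-(a * (x + y))) ^ 2 = ρ * (x + y) ^ 2 by rw [← ha]; ring]
    have h2 : (1:ℝ) - ρ ^ 2 ≠ 0 := by nlinarith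
    have hvne : v ≠ 0 := hv.ne'
    rw [hv_def] at *
    field_simp
    ring
  rw [gauss2, ← hconst, hexp2]
  ring

lemma marg_y {ρ : ℝ} (hv : 0 < 1 - ρ) (x w : ℝ) :
    ∫ y', fXXW ρ (x, y', w) = gauss1 1 w * gauss1 (1 - ρ) (x - Real.sqrt ρ * w) := by
  simp only [fXXW]
  rw [integral_const_mul, integral_gauss1_shift hv, mul_one]

lemma marg_x {ρ : ℝ} (hv : 0 < 1 - ρ) (y w : ℝ) :
    ∫ x', fXXW ρ (x', y, w) = gauss1 1 w * gauss1 (1 - ρ) (y - Real.sqrt ρ * w) := by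
  simp only [fXXW]
  have : ∀ x' : ℝ, gauss1 1 w * gauss1 (1 - ρ) (x' - Real.sqrt ρ * w)
        * gauss1 (1 - ρ) (y - Real.sqrt ρ * w)
      = (gauss1 1 w * gauss1 (1 - ρ) (y - Real.sqrt ρ * w))
        * gauss1 (1 - ρ) (x' - Real.sqrt ρ * w) := fun _ => by ring
  simp_rw [this]
  rw [integral_const_mul, integral_gauss1_shift hv, mul_one]

lemma marg_xy {ρ : ℝ} (hv : 0 < 1 - ρ) (w : ℝ) :
    ∫ q : ℝ × ℝ, fXXW ρ (q.1, q.2, w) = gauss1 1 w := by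
  simp only [fXXW]
  rw [Measure.volume_eq_prod]
  rw [integral_prod_mul (f := fun x' => gauss1 1 w * gauss1 (1 - ρ) (x' - Real.sqrt ρ * w))
    (g := fun y' => gauss1 (1 - ρ) (y' - Real.sqrt ρ * w))]
  rw [integral_const_mul, integral_gauss1_shift hv]
  ring

lemma gauss2_factor {ρ : ℝ} (hρ2 : 0 < 1 - ρ ^ 2) (x t : ℝ) :
    gauss2 ρ x (t + ρ * x) = gauss1 1 x * gauss1 (1 - ρ ^ 2) t := by
  simp only [gauss2, gauss1]
  have h2π : (0:ℝ) < 2 * π := by positivity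
  have hconst : (2 * π * Real.sqrt (1 - ρ ^ 2))⁻¹
      = (Real.sqrt (2 * π * 1))⁻¹ * (Real.sqrt (2 * π * (1 - ρ ^ 2)))⁻¹ := by
    rw [mul_one, Real.sqrt_mul h2π.le]
    have hs : Real.sqrt (2 * π) * Real.sqrt (2 * π) = 2 * π :=
      Real.mul_self_sqrt h2π.le
    rw [← hs]
    have h1 : Real.sqrt (2 * π) ≠ 0 := by positivity
    have h2 : Real.sqrt (1 - ρ ^ 2) ≠ 0 := by positivity
    field_simp
    rw [Real.sqrt_sq (Real.sqrt_nonneg _)]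
  have hexp : -(x ^ 2 - 2 * ρ * x * (t + ρ * x) + (t + ρ * x) ^ 2) / (2 * (1 - ρ ^ 2))
      = -(x ^ 2) / (2 * 1) + -(t ^ 2) / (2 * (1 - ρ ^ 2)) := by
    field_simp
    ring
  rw [hconst, hexp, Real.exp_add]
  ring

lemma continuous_gauss1 (v : ℝ) : Continuous (gauss1 v) := by
  unfold gauss1; fun_prop

lemma measurable_gauss1 (v : ℝ) : Measurable (gauss1 v) := (continuous_gauss1 v).measurable

lemma continuous_fXXW (ρ : ℝ) : Continuous (fXXW ρ) := by
  unfold fXXW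
  exact (((continuous_gauss1 1).comp (continuous_snd.comp continuous_snd)).mul
      ((continuous_gauss1 _).comp (continuous_fst.sub
        (continuous_const.mul (continuous_snd.comp continuous_snd))))).mul
    ((continuous_gauss1 _).comp ((continuous_fst.comp continuous_snd).sub
      (continuous_const.mul (continuous_snd.comp continuous_snd))))

lemma gaussianReal_eq_withDensity_gauss1 {v : ℝ} (hv : 0 < v) :
    gaussianReal 0 ⟨v, hv.le⟩ = volume.withDensity (fun x => ENNReal.ofReal (gauss1 v x)) := by
  have hne : (⟨v, hv.le⟩ : ℝ≥0) ≠ 0 :=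
    fun h => hv.ne' (congrArg NNReal.toReal h : v = 0)
  rw [gaussianReal_of_var_ne_zero 0 hne]
  congr 1
  funext x
  show ENNReal.ofReal (gaussianPDFReal 0 ⟨v, hv.le⟩ x) = _
  rw [gauss1_eq_pdf hv.le]

lemma part1 {ρ : ℝ} (hρ0 : 0 ≤ ρ) (hρ1 : ρ < 1) :
    (Measure.map
        (fun p : ℝ × ℝ × ℝ =>
          (Real.sqrt ρ * p.1 + Real.sqrt (1 - ρ) * p.2.1,
            Real.sqrt ρ * p.1 + Real.sqrt (1 - ρ) * p.2.2, p.1))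
        ((gaussianReal 0 1).prod ((gaussianReal 0 1).prod (gaussianReal 0 1)))
      = volume.withDensity (fun z => ENNReal.ofReal (fXXW ρ z))) := by
  have hv : (0:ℝ) < 1 - ρ := by linarith
  set a := Real.sqrt ρ with ha_def
  set b := Real.sqrt (1 - ρ) with hb_def
  have hb2 : b ^ 2 = 1 - ρ := Real.sq_sqrt hv.le
  have hbm : Measurable (fun x : ℝ => b * x) := measurable_id.const_mul b
  -- step B : scaling
  have hmap : Measure.map (fun x : ℝ => b * x) (gaussianReal 0 1)
      = gaussianReal 0 ⟨1 - ρ, hv.le⟩ := by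
    rw [show (fun x : ℝ => b * x) = (b * ·) from rfl, gaussianReal_map_const_mul b]
    congr 1
    · simp
    · ext
      simp [hb2]
      rfl
  have hD : Measure.map (fun p : ℝ × ℝ × ℝ => (p.1, b * p.2.1, b * p.2.2))
        ((gaussianReal 0 1).prod ((gaussianReal 0 1).prod (gaussianReal 0 1)))
      = (gaussianReal 0 1).prod
          ((gaussianReal 0 ⟨1 - ρ, hv.le⟩).prod (gaussianReal 0 ⟨1 - ρ, hv.le⟩)) := by
    have inner : Measure.map (Prod.map (fun x : ℝ => b * x) (fun x : ℝ => b * x))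
          ((gaussianReal 0 1).prod (gaussianReal 0 1))
        = (gaussianReal 0 ⟨1 - ρ, hv.le⟩).prod (gaussianReal 0 ⟨1 - ρ, hv.le⟩) := by
      rw [← Measure.map_prod_map _ _ hbm hbm, hmap]
    calc Measure.map (fun p : ℝ × ℝ × ℝ => (p.1, b * p.2.1, b * p.2.2))
          ((gaussianReal 0 1).prod ((gaussianReal 0 1).prod (gaussianReal 0 1)))
        = Measure.map (Prod.map (id : ℝ → ℝ) (Prod.map (fun x : ℝ => b * x) (fun x : ℝ => b * x)))
          ((gaussianReal 0 1).prod ((gaussianReal 0 1).prod (gaussianReal 0 1))) := rfl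
      _ = _ := by
          rw [← Measure.map_prod_map _ _ measurable_id (hbm.prodMap hbm), Measure.map_id, inner]
  -- step C : withDensity form
  have hC : (gaussianReal 0 1).prod
        ((gaussianReal 0 ⟨1 - ρ, hv.le⟩).prod (gaussianReal 0 ⟨1 - ρ, hv.le⟩))
      = volume.withDensity (fun p : ℝ × ℝ × ℝ =>
          ENNReal.ofReal (gauss1 1 p.1 * (gauss1 (1 - ρ) p.2.1 * gauss1 (1 - ρ) p.2.2))) := by
    have h1 : gaussianReal 0 1 = volume.withDensity (fun x => ENNReal.ofReal (gauss1 1 x)) :=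
      gaussianReal_eq_withDensity_gauss1 one_pos
    have hvv := gaussianReal_eq_withDensity_gauss1 hv
    rw [h1, hvv, withDensity_prod_ofReal _ _ (measurable_gauss1 _) (measurable_gauss1 _)]
    have : ((volume : Measure ℝ).prod volume).withDensity
          (fun p : ℝ × ℝ => ENNReal.ofReal (gauss1 (1-ρ) p.1) * ENNReal.ofReal (gauss1 (1-ρ) p.2))
        = (volume : Measure (ℝ × ℝ)).withDensity
          (fun p : ℝ × ℝ => ENNReal.ofReal (gauss1 (1-ρ) p.1 * gauss1 (1-ρ) p.2)) := by
      rw [← Measure.volume_eq_prod]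
      congr 1
      funext p
      rw [ENNReal.ofReal_mul (gauss1_nonneg _ _)]
    rw [this]
    have h2 : Measurable (fun p : ℝ × ℝ => gauss1 (1-ρ) p.1 * gauss1 (1-ρ) p.2) :=
      ((measurable_gauss1 _).comp measurable_fst).mul ((measurable_gauss1 _).comp measurable_snd)
    rw [withDensity_prod_ofReal _ _ (measurable_gauss1 _) h2, ← Measure.volume_eq_prod]
    congr 1
    funext p
    rw [ENNReal.ofReal_mul (gauss1_nonneg _ _), ENNReal.ofReal_mul (gauss1_nonneg _ _),
      ENNReal.ofReal_mul (gauss1_nonneg _ _)]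
  -- step D : shear
  have hmeasf : Measurable (fun z : ℝ × ℝ × ℝ => ENNReal.ofReal (fXXW ρ z)) :=
    (continuous_fXXW ρ).measurable.ennreal_ofReal
  have hpt : (fun p : ℝ × ℝ × ℝ =>
        ENNReal.ofReal (gauss1 1 p.1 * (gauss1 (1 - ρ) p.2.1 * gauss1 (1 - ρ) p.2.2)))
      = fun p => (fun z => ENNReal.ofReal (fXXW ρ z)) (shear3 a p) := by
    funext p
    simp only [ha_def]
    simp only [shear3, Homeomorph.homeomorph_mk_coe, Equiv.coe_fn_mk, fXXW, add_sub_cancel_left]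
    ring_nf
  have hcomp : (fun p : ℝ × ℝ × ℝ =>
        (a * p.1 + b * p.2.1, a * p.1 + b * p.2.2, p.1))
      = (shear3 a) ∘ (fun p : ℝ × ℝ × ℝ => (p.1, b * p.2.1, b * p.2.2)) := rfl
  rw [hcomp, ← Measure.map_map (shear3 a).continuous.measurable
    (measurable_fst.prodMk ((measurable_snd.fst.const_mul b).prodMk
      (measurable_snd.snd.const_mul b))), hD, hC, hpt,
    map_withDensity_mp (mp_shear3 a) (shear3 a).measurableEmbedding hmeasf]

lemma dent3 {ρ : ℝ} (hρ0 : 0 ≤ ρ) (hρ1 : ρ < 1) :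
    dent (fXXW ρ) = (Real.log (2 * π * 1) / 2 + 1/2) + 2 * (Real.log (2 * π * (1 - ρ)) / 2 + 1/2) := by
  have hv : (0:ℝ) < 1 - ρ := by linarith
  unfold dent
  rw [← (mp_shear3 (Real.sqrt ρ)).integral_comp (shear3 (Real.sqrt ρ)).measurableEmbedding
    (fun z => fXXW ρ z * Real.log (fXXW ρ z))]
  have hs : ∀ p : ℝ × ℝ × ℝ, fXXW ρ (shear3 (Real.sqrt ρ) p)
      = gauss1 1 p.1 * (gauss1 (1 - ρ) p.2.1 * gauss1 (1 - ρ) p.2.2) := by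
    intro p
    simp only [shear3, Homeomorph.homeomorph_mk_coe, Equiv.coe_fn_mk, fXXW, add_sub_cancel_left]
    ring
  simp only [hs]
  have hlog : ∀ p : ℝ × ℝ × ℝ,
      (gauss1 1 p.1 * (gauss1 (1-ρ) p.2.1 * gauss1 (1-ρ) p.2.2))
        * Real.log (gauss1 1 p.1 * (gauss1 (1-ρ) p.2.1 * gauss1 (1-ρ) p.2.2))
      = (gauss1 1 p.1 * Real.log (gauss1 1 p.1)) * (gauss1 (1-ρ) p.2.1 * gauss1 (1-ρ) p.2.2)
        + gauss1 1 p.1 * ((gauss1 (1-ρ) p.2.1 * Real.log (gauss1 (1-ρ) p.2.1)) * gauss1 (1-ρ) p.2.2)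
        + gauss1 1 p.1 * (gauss1 (1-ρ) p.2.1 * (gauss1 (1-ρ) p.2.2 * Real.log (gauss1 (1-ρ) p.2.2))) := by
    intro p
    rw [Real.log_mul (gauss1_pos one_pos _).ne'
        (mul_pos (gauss1_pos hv _) (gauss1_pos hv _)).ne',
      Real.log_mul (gauss1_pos hv _).ne' (gauss1_pos hv _).ne']
    ring
  simp only [hlog]
  rw [Measure.volume_eq_prod]
  have hgv2 : Integrable (fun q : ℝ × ℝ => gauss1 (1-ρ) q.1 * gauss1 (1-ρ) q.2)
      (volume : Measure (ℝ × ℝ)) := by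
    rw [Measure.volume_eq_prod]; exact (integrable_gauss1 hv).mul_prod (integrable_gauss1 hv)
  have hB2 : Integrable (fun q : ℝ × ℝ =>
      (gauss1 (1-ρ) q.1 * Real.log (gauss1 (1-ρ) q.1)) * gauss1 (1-ρ) q.2)
      (volume : Measure (ℝ × ℝ)) := by
    rw [Measure.volume_eq_prod]
    exact (integrable_gauss1_mul_log hv).mul_prod (integrable_gauss1 hv)
  have hC2 : Integrable (fun q : ℝ × ℝ =>
      gauss1 (1-ρ) q.1 * (gauss1 (1-ρ) q.2 * Real.log (gauss1 (1-ρ) q.2)))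
      (volume : Measure (ℝ × ℝ)) := by
    rw [Measure.volume_eq_prod]
    exact (integrable_gauss1 hv).mul_prod (integrable_gauss1_mul_log hv)
  have iA : Integrable (fun p : ℝ × ℝ × ℝ =>
      (gauss1 1 p.1 * Real.log (gauss1 1 p.1)) * (gauss1 (1-ρ) p.2.1 * gauss1 (1-ρ) p.2.2))
      ((volume : Measure ℝ).prod (volume : Measure (ℝ × ℝ))) :=
    (integrable_gauss1_mul_log one_pos).mul_prod hgv2
  have iB : Integrable (fun p : ℝ × ℝ × ℝ =>
      gauss1 1 p.1 * ((gauss1 (1-ρ) p.2.1 * Real.log (gauss1 (1-ρ) p.2.1)) * gauss1 (1-ρ) p.2.2))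
      ((volume : Measure ℝ).prod (volume : Measure (ℝ × ℝ))) :=
    (integrable_gauss1 one_pos).mul_prod hB2
  have iC : Integrable (fun p : ℝ × ℝ × ℝ =>
      gauss1 1 p.1 * (gauss1 (1-ρ) p.2.1 * (gauss1 (1-ρ) p.2.2 * Real.log (gauss1 (1-ρ) p.2.2))))
      ((volume : Measure ℝ).prod (volume : Measure (ℝ × ℝ))) :=
    (integrable_gauss1 one_pos).mul_prod hC2
  have iAB : Integrable (fun p : ℝ × ℝ × ℝ =>
      (gauss1 1 p.1 * Real.log (gauss1 1 p.1)) * (gauss1 (1-ρ) p.2.1 * gauss1 (1-ρ) p.2.2)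
        + gauss1 1 p.1 * ((gauss1 (1-ρ) p.2.1 * Real.log (gauss1 (1-ρ) p.2.1)) * gauss1 (1-ρ) p.2.2))
      ((volume : Measure ℝ).prod (volume : Measure (ℝ × ℝ))) := iA.add iB
  rw [integral_add iAB iC, integral_add iA iB,
    integral_prod_mul (fun w => gauss1 1 w * Real.log (gauss1 1 w))
      (fun q : ℝ × ℝ => gauss1 (1-ρ) q.1 * gauss1 (1-ρ) q.2),
    integral_prod_mul (gauss1 1)
      (fun q : ℝ × ℝ => (gauss1 (1-ρ) q.1 * Real.log (gauss1 (1-ρ) q.1)) * gauss1 (1-ρ) q.2),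
    integral_prod_mul (gauss1 1)
      (fun q : ℝ × ℝ => gauss1 (1-ρ) q.1 * (gauss1 (1-ρ) q.2 * Real.log (gauss1 (1-ρ) q.2)))]
  have e1 : ∫ q : ℝ × ℝ, gauss1 (1-ρ) q.1 * gauss1 (1-ρ) q.2 = 1 := by
    rw [Measure.volume_eq_prod,
      integral_prod_mul (gauss1 (1-ρ)) (gauss1 (1-ρ)), integral_gauss1 hv]; norm_num
  have e2 : ∫ q : ℝ × ℝ, (gauss1 (1-ρ) q.1 * Real.log (gauss1 (1-ρ) q.1)) * gauss1 (1-ρ) q.2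
      = -(Real.log (2 * π * (1-ρ)) / 2 + 1/2) := by
    rw [Measure.volume_eq_prod,
      integral_prod_mul (fun x => gauss1 (1-ρ) x * Real.log (gauss1 (1-ρ) x)) (gauss1 (1-ρ)),
      integral_gauss1_mul_log hv, integral_gauss1 hv]
    ring
  have e3 : ∫ q : ℝ × ℝ, gauss1 (1-ρ) q.1 * (gauss1 (1-ρ) q.2 * Real.log (gauss1 (1-ρ) q.2))
      = -(Real.log (2 * π * (1-ρ)) / 2 + 1/2) := by
    rw [Measure.volume_eq_prod,
      integral_prod_mul (gauss1 (1-ρ)) (fun x => gauss1 (1-ρ) x * Real.log (gauss1 (1-ρ) x)),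
      integral_gauss1_mul_log hv, integral_gauss1 hv]
    ring
  rw [e1, e2, e3, integral_gauss1_mul_log one_pos, integral_gauss1 one_pos]
  ring

lemma dent2 {ρ : ℝ} (hρ0 : 0 ≤ ρ) (hρ1 : ρ < 1) :
    dent (fun q : ℝ × ℝ => ∫ w, fXXW ρ (q.1, q.2, w))
      = (Real.log (2 * π * 1) / 2 + 1/2) + (Real.log (2 * π * (1 - ρ^2)) / 2 + 1/2) := by
  have hc : (0:ℝ) < 1 - ρ^2 := by nlinarith
  have hfq : (fun q : ℝ × ℝ => ∫ w, fXXW ρ (q.1, q.2, w))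
      = fun q : ℝ × ℝ => gauss2 ρ q.1 q.2 := funext fun q => marg_w hρ0 hρ1 _ _
  rw [hfq]
  unfold dent
  rw [← (mp_shear2 ρ).integral_comp (shear2 ρ).measurableEmbedding
    (fun q : ℝ × ℝ => gauss2 ρ q.1 q.2 * Real.log (gauss2 ρ q.1 q.2))]
  have hs : ∀ p : ℝ × ℝ, gauss2 ρ (shear2 ρ p).1 (shear2 ρ p).2
      = gauss1 1 p.1 * gauss1 (1 - ρ^2) p.2 := by
    intro p
    simp only [shear2, Homeomorph.homeomorph_mk_coe, Equiv.coe_fn_mk]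
    exact gauss2_factor hc p.1 p.2
  simp only [hs]
  have hlog : ∀ p : ℝ × ℝ,
      (gauss1 1 p.1 * gauss1 (1-ρ^2) p.2) * Real.log (gauss1 1 p.1 * gauss1 (1-ρ^2) p.2)
      = (gauss1 1 p.1 * Real.log (gauss1 1 p.1)) * gauss1 (1-ρ^2) p.2
        + gauss1 1 p.1 * (gauss1 (1-ρ^2) p.2 * Real.log (gauss1 (1-ρ^2) p.2)) := by
    intro p
    rw [Real.log_mul (gauss1_pos one_pos _).ne' (gauss1_pos hc _).ne']
    ring
  simp only [hlog]
  rw [Measure.volume_eq_prod]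
  have iA := (integrable_gauss1_mul_log one_pos).mul_prod (integrable_gauss1 hc)
  have iB := (integrable_gauss1 one_pos).mul_prod (integrable_gauss1_mul_log hc)
  rw [integral_add iA iB,
    integral_prod_mul (fun x => gauss1 1 x * Real.log (gauss1 1 x)) (gauss1 (1-ρ^2)),
    integral_prod_mul (gauss1 1) (fun x => gauss1 (1-ρ^2) x * Real.log (gauss1 (1-ρ^2) x)),
    integral_gauss1_mul_log one_pos, integral_gauss1_mul_log hc,
    integral_gauss1 one_pos, integral_gauss1 hc]
  ring

lemma dent1 {ρ : ℝ} (hρ1 : ρ < 1) :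
    dent (fun w : ℝ => ∫ q : ℝ × ℝ, fXXW ρ (q.1, q.2, w))
      = Real.log (2 * π * 1) / 2 + 1/2 := by
  have hv : (0:ℝ) < 1 - ρ := by linarith
  have hfq : (fun w : ℝ => ∫ q : ℝ × ℝ, fXXW ρ (q.1, q.2, w)) = gauss1 1 :=
    funext fun w => marg_xy hv w
  rw [hfq]
  unfold dent
  rw [integral_gauss1_mul_log one_pos]
  ring

lemma part4 {ρ : ℝ} (hρ0 : 0 ≤ ρ) (hρ1 : ρ < 1) :
    dent (fun q : ℝ × ℝ => ∫ w, fXXW ρ (q.1, q.2, w))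
      + dent (fun w : ℝ => ∫ q : ℝ × ℝ, fXXW ρ (q.1, q.2, w)) - dent (fXXW ρ)
      = 1 / 2 * Real.log ((1 + ρ) / (1 - ρ)) := by
  rw [dent2 hρ0 hρ1, dent1 hρ1, dent3 hρ0 hρ1]
  have h1 : (0:ℝ) < 1 + ρ := by linarith
  have h2 : (0:ℝ) < 1 - ρ := by linarith
  have h2π : (0:ℝ) < 2 * π := by positivity
  have e1 : Real.log (2 * π * (1 - ρ^2)) = Real.log (2*π) + (Real.log (1+ρ) + Real.log (1-ρ)) := by
    rw [show 2 * π * (1 - ρ^2) = (2*π) * ((1+ρ) * (1-ρ)) by ring,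
      Real.log_mul h2π.ne' (by positivity), Real.log_mul h1.ne' h2.ne']
  have e2 : Real.log (2 * π * (1 - ρ)) = Real.log (2*π) + Real.log (1-ρ) :=
    Real.log_mul h2π.ne' h2.ne'
  have e3 : Real.log ((1+ρ)/(1-ρ)) = Real.log (1+ρ) - Real.log (1-ρ) :=
    Real.log_div h1.ne' h2.ne'
  rw [mul_one, e1, e2, e3]
  ring


lemma part2 {ρ : ℝ} (hρ1 : ρ < 1) (x y w : ℝ) :
    fXXW ρ (x, y, w) * (∫ q : ℝ × ℝ, fXXW ρ (q.1, q.2, w))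
      = (∫ y', fXXW ρ (x, y', w)) * (∫ x', fXXW ρ (x', y, w)) := by
  have hv : (0:ℝ) < 1 - ρ := by linarith
  rw [marg_xy hv, marg_y hv, marg_x hv]
  simp only [fXXW]
  ring

/-- Achievability for the Gaussian common information: with `W, N₁, N₂` i.i.d.
standard Gaussians and `Xᵢ = √ρ·W + √(1−ρ)·Nᵢ`, `ρ ∈ [0,1)`: the triple
`(X₁,X₂,W)` has density `fXXW ρ`; `X₁` and `X₂` are conditionally independent
given `W`; `(X₁,X₂)` is bivariate Gaussian with correlation `ρ`; and
`I(X₁,X₂;W) = (1/2)·log((1+ρ)/(1−ρ))`. -/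
theorem gaussian_common_information_achievability (ρ : ℝ) (hρ0 : 0 ≤ ρ) (hρ1 : ρ < 1) :
    -- (X₁, X₂, W) has joint density fXXW ρ
    (Measure.map
        (fun p : ℝ × ℝ × ℝ =>
          (Real.sqrt ρ * p.1 + Real.sqrt (1 - ρ) * p.2.1,
            Real.sqrt ρ * p.1 + Real.sqrt (1 - ρ) * p.2.2, p.1))
        ((gaussianReal 0 1).prod ((gaussianReal 0 1).prod (gaussianReal 0 1)))
      = volume.withDensity (fun z => ENNReal.ofReal (fXXW ρ z))) ∧
    -- X₁ and X₂ are conditionally independent given W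
    (∀ x y w, fXXW ρ (x, y, w) * (∫ q : ℝ × ℝ, fXXW ρ (q.1, q.2, w))
        = (∫ y', fXXW ρ (x, y', w)) * (∫ x', fXXW ρ (x', y, w))) ∧
    -- (X₁, X₂) is jointly Gaussian with correlation ρ
    (∀ x y, (∫ w, fXXW ρ (x, y, w)) = gauss2 ρ x y) ∧
    -- I(X₁,X₂;W) = (1/2)·log((1+ρ)/(1−ρ))
    dent (fun q : ℝ × ℝ => ∫ w, fXXW ρ (q.1, q.2, w))
      + dent (fun w : ℝ => ∫ q : ℝ × ℝ, fXXW ρ (q.1, q.2, w)) - dent (fXXW ρ)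
      = 1 / 2 * Real.log ((1 + ρ) / (1 - ρ)) := by
  refine ⟨part1 hρ0 hρ1, fun x y w => part2 hρ1 x y w, fun x y => marg_w hρ0 hρ1 x y, part4 hρ0 hρ1⟩
end
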